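/- arXiv:0711.1313 — 4 statements merged into one kernel-verified Lean document; each statement's English description precedes it below -/
import Mathlib

section
/- Let f be β-Hölder continuous on [0,T] with 0 < β ≤ 1, let γ ≥ 0, α real with α + β > 0 and α + β ≤ 1, and 0 ≤ a < b < v ≤ T. Then |∫_a^b s^γ (v-s)^α df(s)| ≤ ‖f‖_β (2 + |α/(α+β)|) b^γ ((v-b)^{α+β} + (v-a)^{α+β}), where the integral is a Riemann–Stieltjes integral and ‖f‖_β = sup_{0≤s<t≤T} |f(t)-f(s)|/(t-s)^β. -/
lemma key_ineq (α β x y z : ℝ) (hy : 0 < y) (hxy : y ≤ x) (hz : 0 ≤ z) (hzy : z ≤ y)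
    (hβ : 0 < β) (hαβ : 0 < α + β) :
    |x ^ α - y ^ α| * z ^ β ≤ (|α| / (α + β)) * (x ^ (α + β) - y ^ (α + β)) := by
  have hx : 0 < x := lt_of_lt_of_le hy hxy
  rcases eq_or_ne α 0 with h0 | h0
  · subst h0
    simp only [Real.rpow_zero, sub_self, abs_zero, zero_mul, zero_div]
    have : y ^ (0 + β) ≤ x ^ (0 + β) := Real.rpow_le_rpow hy.le hxy (by linarith)
    nlinarith
  · have huIcc : Set.uIcc y x = Set.Icc y x := Set.uIcc_of_le hxy
    have hzero : (0:ℝ) ∉ Set.uIcc y x := by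
      rw [huIcc]; rintro ⟨h1, h2⟩; linarith
    have hcont1 : ContinuousOn (fun s : ℝ => s ^ (α - 1)) (Set.uIcc y x) := by
      intro s hs
      have hs0 : s ≠ 0 := by rw [huIcc] at hs; have := hs.1; intro h; rw [h] at this; linarith
      exact (Real.continuousAt_rpow_const s (α - 1) (Or.inl hs0)).continuousWithinAt
    have hcont2 : ContinuousOn (fun s : ℝ => s ^ (α + β - 1)) (Set.uIcc y x) := by
      intro s hs
      have hs0 : s ≠ 0 := by rw [huIcc] at hs; have := hs.1; intro h; rw [h] at this; linarith
      exact (Real.continuousAt_rpow_const s (α + β - 1) (Or.inl hs0)).continuousWithinAt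
    have hInt1 : IntervalIntegrable (fun s : ℝ => s ^ (α - 1)) MeasureTheory.volume y x :=
      hcont1.intervalIntegrable
    have hInt2 : IntervalIntegrable (fun s : ℝ => s ^ (α + β - 1)) MeasureTheory.volume y x :=
      hcont2.intervalIntegrable
    have e1 : α - 1 + 1 = α := by ring
    have e2 : α + β - 1 + 1 = α + β := by ring
    have h1 : ∫ s in y..x, s ^ (α - 1) = (x ^ α - y ^ α) / α := by
      rw [integral_rpow (Or.inr ⟨by intro h; apply h0; linarith, hzero⟩), e1]
    have h2 : ∫ s in y..x, s ^ (α + β - 1) = (x ^ (α + β) - y ^ (α + β)) / (α + β) := by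
      rw [integral_rpow (Or.inl (by linarith)), e2]
    have h3 : ∫ s in y..x, s ^ (α - 1) * z ^ β ≤ ∫ s in y..x, s ^ (α + β - 1) := by
      apply intervalIntegral.integral_mono_on hxy (hInt1.mul_const _) hInt2
      intro s hs
      have hs0 : 0 < s := lt_of_lt_of_le hy hs.1
      have hzs : z ^ β ≤ s ^ β := Real.rpow_le_rpow hz (le_trans hzy hs.1) hβ.le
      calc s ^ (α - 1) * z ^ β ≤ s ^ (α - 1) * s ^ β :=
            mul_le_mul_of_nonneg_left hzs (Real.rpow_nonneg hs0.le _)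
        _ = s ^ (α + β - 1) := by rw [← Real.rpow_add hs0]; congr 1; ring
    have h4 : 0 ≤ ∫ s in y..x, s ^ (α - 1) :=
      intervalIntegral.integral_nonneg hxy
        (fun s hs => Real.rpow_nonneg (le_of_lt (lt_of_lt_of_le hy hs.1)) _)
    have h5 : x ^ α - y ^ α = α * ∫ s in y..x, s ^ (α - 1) := by
      rw [h1]; field_simp
    calc |x ^ α - y ^ α| * z ^ β
        = |α| * ((∫ s in y..x, s ^ (α - 1)) * z ^ β) := by
          rw [h5, abs_mul, abs_of_nonneg h4]; ring
      _ = |α| * ∫ s in y..x, s ^ (α - 1) * z ^ β := by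
          rw [intervalIntegral.integral_mul_const]
      _ ≤ |α| * ∫ s in y..x, s ^ (α + β - 1) :=
          mul_le_mul_of_nonneg_left h3 (abs_nonneg α)
      _ = |α| * ((x ^ (α + β) - y ^ (α + β)) / (α + β)) := by rw [h2]
      _ = (|α| / (α + β)) * (x ^ (α + β) - y ^ (α + β)) := by ring

lemma abel_sum (p H : ℕ → ℝ) (n : ℕ) :
    ∑ i ∈ Finset.range (n+1), p i * (H (i+1) - H i)
      = p n * H (n+1) - p 0 * H 0 + ∑ j ∈ Finset.range n, (p j - p (j+1)) * H (j+1) := by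
  induction n with
  | zero => simp [mul_sub]
  | succ n ih =>
    rw [Finset.sum_range_succ, ih, Finset.sum_range_succ]
    ring

lemma mono_of_step (t : ℕ → ℝ) (n : ℕ) (h : ∀ i < n, t i < t (i+1)) :
    ∀ i j, i ≤ j → j ≤ n → t i ≤ t j := by
  intro i j
  induction j with
  | zero => intro hij _; rw [Nat.le_zero.mp hij]
  | succ j ih =>
    intro hij hjn
    rcases Nat.lt_succ_iff_lt_or_eq.mp (Nat.lt_succ_of_le hij) with h' | h'
    · exact (ih (Nat.lt_succ_iff.mp h') (by omega)).trans (h j (by omega)).le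
    · rw [h']

lemma sum_bound (β γ α a b v K : ℝ) (f : ℝ → ℝ) (m : ℕ) (t : ℕ → ℝ)
    (hβ : 0 < β) (hγ : 0 ≤ γ) (hαβ : 0 < α + β)
    (ha : 0 ≤ a) (hab : a < b) (hbv : b < v)
    (hK : 0 ≤ K)
    (hf : ∀ x ∈ Set.Icc a b, ∀ y ∈ Set.Icc a b, |f x - f y| ≤ K * |x - y| ^ β)
    (ht0 : t 0 = a) (htn : t (m+1) = b)
    (hstep : ∀ i < m+1, t i < t (i+1)) :
    |∑ i ∈ Finset.range (m+1), (t i) ^ γ * (v - t i) ^ α * (f (t (i+1)) - f (t i))|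
      ≤ K * (2 + |α| / (α + β)) * b ^ γ * (v - a) ^ (α + β) := by
  have hab' : a ≤ b := hab.le
  have hva : 0 < v - a := by linarith
  have hvb : 0 < v - b := by linarith
  have hmono : ∀ i j, i ≤ j → j ≤ m+1 → t i ≤ t j := mono_of_step t (m+1) hstep
  have hta : ∀ i, i ≤ m+1 → a ≤ t i := fun i hi => ht0 ▸ hmono 0 i (Nat.zero_le i) hi
  have htb : ∀ i, i ≤ m+1 → t i ≤ b := fun i hi => htn ▸ hmono i (m+1) hi le_rfl
  -- Abel summation
  have habel : ∑ i ∈ Finset.range (m+1), (t i) ^ γ * (v - t i) ^ α * (f (t (i+1)) - f (t i))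
      = -(a ^ γ * (v - a) ^ α * (f a - f b))
        + ∑ j ∈ Finset.range m,
            ((t j) ^ γ * (v - t j) ^ α - (t (j+1)) ^ γ * (v - t (j+1)) ^ α) * (f (t (j+1)) - f b) := by
    have h := abel_sum (fun i => (t i) ^ γ * (v - t i) ^ α) (fun i => f (t i) - f b) m
    simp only [htn, ht0, sub_self, mul_zero, zero_sub] at h
    rw [← h]
    exact Finset.sum_congr rfl fun i hi => by ring
  rw [habel]
  -- Term 0 bound
  have hE0 : |a ^ γ * (v - a) ^ α * (f a - f b)| ≤ K * b ^ γ * (v - a) ^ (α + β) := by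
    have h1 : |f a - f b| ≤ K * (b - a) ^ β := by
      have h := hf a ⟨le_rfl, hab'⟩ b ⟨hab', le_rfl⟩
      rwa [show |a - b| = b - a by rw [abs_of_nonpos (by linarith)]; ring] at h
    have haγ : (0:ℝ) ≤ a ^ γ := Real.rpow_nonneg ha _
    have hvaα : (0:ℝ) ≤ (v - a) ^ α := Real.rpow_nonneg hva.le _
    have hba : (b - a) ^ β ≤ (v - a) ^ β := Real.rpow_le_rpow (by linarith) (by linarith) hβ.le
    have haγb : a ^ γ ≤ b ^ γ := Real.rpow_le_rpow ha hab' hγ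
    calc |a ^ γ * (v - a) ^ α * (f a - f b)|
        = a ^ γ * (v - a) ^ α * |f a - f b| := by
          rw [abs_mul, abs_of_nonneg (mul_nonneg haγ hvaα)]
      _ ≤ a ^ γ * (v - a) ^ α * (K * (b - a) ^ β) := by
          apply mul_le_mul_of_nonneg_left h1 (mul_nonneg haγ hvaα)
      _ ≤ b ^ γ * (v - a) ^ α * (K * (v - a) ^ β) := by
          apply mul_le_mul (mul_le_mul_of_nonneg_right haγb hvaα)
            (mul_le_mul_of_nonneg_left hba hK)
            (mul_nonneg hK (Real.rpow_nonneg (by linarith) _))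
            (mul_nonneg (Real.rpow_nonneg (le_trans ha hab') _) hvaα)
      _ = K * b ^ γ * (v - a) ^ (α + β) := by
          rw [Real.rpow_add hva]; ring
  -- per-term bounds
  have hEj : ∀ j ∈ Finset.range m,
      |((t j) ^ γ * (v - t j) ^ α - (t (j+1)) ^ γ * (v - t (j+1)) ^ α) * (f (t (j+1)) - f b)|
      ≤ K * (v - a) ^ (α + β) * ((t (j+1)) ^ γ - (t j) ^ γ)
        + K * b ^ γ * (|α| / (α + β)) * ((v - t j) ^ (α + β) - (v - t (j+1)) ^ (α + β)) := by
    intro j hj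
    have hjm : j < m := Finset.mem_range.mp hj
    have hj1 : j + 1 ≤ m + 1 := by omega
    have hjq : j ≤ m + 1 := by omega
    have ht1b : t (j+1) < b := by
      have h1 : t (j+1) ≤ t m := hmono (j+1) m (by omega) (by omega)
      have h2 : t m < t (m+1) := hstep m (by omega)
      rw [htn] at h2; linarith
    have htj0 : 0 ≤ t j := le_trans ha (hta j hjq)
    have htj10 : 0 ≤ t (j+1) := le_trans ha (hta _ hj1)
    have htjj : t j ≤ t (j+1) := (hstep j (by omega)).le
    have hx : 0 < v - t j := by have := htb j hjq; linarith
    have hy : 0 < v - t (j+1) := by linarith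
    have hyx : v - t (j+1) ≤ v - t j := by linarith
    have hz : 0 ≤ b - t (j+1) := by linarith
    have hzy : b - t (j+1) ≤ v - t (j+1) := by linarith
    have hzx : b - t (j+1) ≤ v - t j := by linarith
    have hkey := key_ineq α β (v - t j) (v - t (j+1)) (b - t (j+1)) hy hyx hz hzy hβ hαβ
    have hfb : |f (t (j+1)) - f b| ≤ K * (b - t (j+1)) ^ β := by
      have h := hf (t (j+1)) ⟨hta _ hj1, htb _ hj1⟩ b ⟨hab', le_rfl⟩
      rwa [show |t (j+1) - b| = b - t (j+1) by rw [abs_of_nonpos (by linarith)]; ring] at h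
    have hγmono : (t j) ^ γ ≤ (t (j+1)) ^ γ := Real.rpow_le_rpow htj0 htjj hγ
    have htγb : (t (j+1)) ^ γ ≤ b ^ γ := Real.rpow_le_rpow htj10 (htb _ hj1) hγ
    have hxα : (0:ℝ) ≤ (v - t j) ^ α := Real.rpow_nonneg hx.le _
    have hzβ : (0:ℝ) ≤ (b - t (j+1)) ^ β := Real.rpow_nonneg hz _
    have htγ0 : (0:ℝ) ≤ (t (j+1)) ^ γ := Real.rpow_nonneg htj10 _
    have hxz : (v - t j) ^ α * (b - t (j+1)) ^ β ≤ (v - a) ^ (α + β) := by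
      calc (v - t j) ^ α * (b - t (j+1)) ^ β
          ≤ (v - t j) ^ α * (v - t j) ^ β :=
            mul_le_mul_of_nonneg_left (Real.rpow_le_rpow hz hzx hβ.le) hxα
        _ = (v - t j) ^ (α + β) := (Real.rpow_add hx α β).symm
        _ ≤ (v - a) ^ (α + β) :=
            Real.rpow_le_rpow hx.le (by have := hta j hjq; linarith) hαβ.le
    have hDx : 0 ≤ (v - t j) ^ (α + β) - (v - t (j+1)) ^ (α + β) :=
      sub_nonneg.mpr (Real.rpow_le_rpow hy.le hyx hαβ.le)
    have hdecomp : |(t j) ^ γ * (v - t j) ^ α - (t (j+1)) ^ γ * (v - t (j+1)) ^ α|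
        ≤ ((t (j+1)) ^ γ - (t j) ^ γ) * (v - t j) ^ α
          + (t (j+1)) ^ γ * |(v - t j) ^ α - (v - t (j+1)) ^ α| := by
      have e : (t j) ^ γ * (v - t j) ^ α - (t (j+1)) ^ γ * (v - t (j+1)) ^ α
          = ((t j) ^ γ - (t (j+1)) ^ γ) * (v - t j) ^ α
            + (t (j+1)) ^ γ * ((v - t j) ^ α - (v - t (j+1)) ^ α) := by ring
      rw [e]
      refine (abs_add_le _ _).trans ?_
      rw [abs_mul, abs_mul, abs_of_nonneg hxα, abs_of_nonneg htγ0,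
        abs_of_nonpos (by linarith : (t j) ^ γ - (t (j+1)) ^ γ ≤ 0)]
      simp [neg_sub]
    calc |((t j) ^ γ * (v - t j) ^ α - (t (j+1)) ^ γ * (v - t (j+1)) ^ α) * (f (t (j+1)) - f b)|
        = |(t j) ^ γ * (v - t j) ^ α - (t (j+1)) ^ γ * (v - t (j+1)) ^ α| * |f (t (j+1)) - f b| :=
          abs_mul _ _
      _ ≤ (((t (j+1)) ^ γ - (t j) ^ γ) * (v - t j) ^ α
            + (t (j+1)) ^ γ * |(v - t j) ^ α - (v - t (j+1)) ^ α|) * (K * (b - t (j+1)) ^ β) := by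
          apply mul_le_mul hdecomp hfb (abs_nonneg _)
          have : 0 ≤ ((t (j+1)) ^ γ - (t j) ^ γ) * (v - t j) ^ α :=
            mul_nonneg (by linarith) hxα
          positivity
      _ = ((t (j+1)) ^ γ - (t j) ^ γ) * ((v - t j) ^ α * (b - t (j+1)) ^ β) * K
          + (t (j+1)) ^ γ * (|(v - t j) ^ α - (v - t (j+1)) ^ α| * (b - t (j+1)) ^ β) * K := by
          ring
      _ ≤ ((t (j+1)) ^ γ - (t j) ^ γ) * ((v - a) ^ (α + β)) * K
          + b ^ γ * ((|α| / (α + β)) * ((v - t j) ^ (α + β) - (v - t (j+1)) ^ (α + β))) * K := by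
          gcongr <;>
            first
              | assumption
              | linarith
              | exact Real.rpow_nonneg (le_trans ha hab') _
              | exact mul_nonneg (div_nonneg (abs_nonneg _) hαβ.le) hDx
      _ = K * (v - a) ^ (α + β) * ((t (j+1)) ^ γ - (t j) ^ γ)
          + K * b ^ γ * (|α| / (α + β)) * ((v - t j) ^ (α + β) - (v - t (j+1)) ^ (α + β)) := by
          ring
  -- assemble
  have hsum := Finset.sum_le_sum hEj
  have htri : |(-(a ^ γ * (v - a) ^ α * (f a - f b))
        + ∑ j ∈ Finset.range m,
            ((t j) ^ γ * (v - t j) ^ α - (t (j+1)) ^ γ * (v - t (j+1)) ^ α) * (f (t (j+1)) - f b))|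
      ≤ |a ^ γ * (v - a) ^ α * (f a - f b)|
        + ∑ j ∈ Finset.range m,
            |((t j) ^ γ * (v - t j) ^ α - (t (j+1)) ^ γ * (v - t (j+1)) ^ α) * (f (t (j+1)) - f b)| := by
    refine (abs_add_le _ _).trans ?_
    rw [abs_neg]
    exact add_le_add le_rfl (Finset.abs_sum_le_sum_abs _ _)
  have hsplit : ∑ j ∈ Finset.range m,
      (K * (v - a) ^ (α + β) * ((t (j+1)) ^ γ - (t j) ^ γ)
        + K * b ^ γ * (|α| / (α + β)) * ((v - t j) ^ (α + β) - (v - t (j+1)) ^ (α + β)))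
      = K * (v - a) ^ (α + β) * ((t m) ^ γ - a ^ γ)
        + K * b ^ γ * (|α| / (α + β)) * ((v - a) ^ (α + β) - (v - t m) ^ (α + β)) := by
    rw [Finset.sum_add_distrib, ← Finset.mul_sum, ← Finset.mul_sum,
      Finset.sum_range_sub (fun j => (t j) ^ γ),
      Finset.sum_range_sub' (fun j => (v - t j) ^ (α + β)), ht0]
  have hfinal : K * b ^ γ * (v - a) ^ (α + β)
      + (K * (v - a) ^ (α + β) * ((t m) ^ γ - a ^ γ)
        + K * b ^ γ * (|α| / (α + β)) * ((v - a) ^ (α + β) - (v - t m) ^ (α + β)))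
      ≤ K * (2 + |α| / (α + β)) * b ^ γ * (v - a) ^ (α + β) := by
    have h1 : (t m) ^ γ ≤ b ^ γ :=
      Real.rpow_le_rpow (le_trans ha (hta m (by omega))) (htb m (by omega)) hγ
    have h2 : (0:ℝ) ≤ a ^ γ := Real.rpow_nonneg ha _
    have h3 : (0:ℝ) ≤ (v - t m) ^ (α + β) := Real.rpow_nonneg (by have := htb m (by omega); linarith) _
    have h4 : (0:ℝ) ≤ K * (v - a) ^ (α + β) := mul_nonneg hK (Real.rpow_nonneg hva.le _)
    have h5 : (0:ℝ) ≤ K * b ^ γ * (|α| / (α + β)) :=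
      mul_nonneg (mul_nonneg hK (Real.rpow_nonneg (le_trans ha hab') _)) (div_nonneg (abs_nonneg _) hαβ.le)
    nlinarith [mul_le_mul_of_nonneg_left (show (t m) ^ γ - a ^ γ ≤ b ^ γ by linarith) h4,
      mul_le_mul_of_nonneg_left (show (v - a) ^ (α + β) - (v - t m) ^ (α + β) ≤ (v - a) ^ (α + β) by linarith) h5]
  calc _ ≤ _ := htri
    _ ≤ K * b ^ γ * (v - a) ^ (α + β)
        + (K * (v - a) ^ (α + β) * ((t m) ^ γ - a ^ γ)
          + K * b ^ γ * (|α| / (α + β)) * ((v - a) ^ (α + β) - (v - t m) ^ (α + β))) := by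
        rw [← hsplit]; exact add_le_add hE0 hsum
    _ ≤ _ := hfinal

/-- `I` is the Riemann–Stieltjes integral `∫_a^b φ(s) df(s)`: the Riemann–Stieltjes sums
over tagged partitions of `[a,b]` converge to `I` as the mesh tends to `0`. -/
def RSIntegral (φ f : ℝ → ℝ) (a b I : ℝ) : Prop :=
  ∀ ε > (0:ℝ), ∃ δ > (0:ℝ), ∀ (n : ℕ) (t τ : ℕ → ℝ),
    0 < n → t 0 = a → t n = b →
    (∀ i < n, t i < t (i + 1)) →
    (∀ i < n, t (i + 1) - t i ≤ δ) →
    (∀ i < n, t i ≤ τ i ∧ τ i ≤ t (i + 1)) →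
    |(∑ i ∈ Finset.range n, φ (τ i) * (f (t (i + 1)) - f (t i))) - I| ≤ ε

/-- Lemma A.4 of the paper: bound for `|∫_a^b s^γ (v-s)^α df(s)|` when `f` is
`β`-Hölder continuous on `[0,T]` with constant `K`. -/
theorem stmt4 (T β γ α a b v K I : ℝ) (f : ℝ → ℝ)
    (hβ : 0 < β) (hβ1 : β ≤ 1) (hγ : 0 ≤ γ)
    (hαβ : 0 < α + β) (hαβ1 : α + β ≤ 1)
    (ha : 0 ≤ a) (hab : a < b) (hbv : b < v) (hvT : v ≤ T)
    (hK : 0 ≤ K)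
    (hf : ∀ x ∈ Set.Icc (0:ℝ) T, ∀ y ∈ Set.Icc (0:ℝ) T, |f x - f y| ≤ K * |x - y| ^ β)
    (hI : RSIntegral (fun s => s ^ γ * (v - s) ^ α) f a b I) :
    |I| ≤ K * (2 + |α / (α + β)|) * b ^ γ * ((v - b) ^ (α + β) + (v - a) ^ (α + β)) := by
  have hab' : a ≤ b := hab.le
  have hbT : b ≤ T := by linarith
  have hf' : ∀ x ∈ Set.Icc a b, ∀ y ∈ Set.Icc a b, |f x - f y| ≤ K * |x - y| ^ β := by
    intro x hx y hy
    exact hf x ⟨le_trans ha hx.1, le_trans hx.2 hbT⟩ y ⟨le_trans ha hy.1, le_trans hy.2 hbT⟩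
  have hc : |α / (α + β)| = |α| / (α + β) := by
    rw [abs_div, abs_of_pos hαβ]
  set B : ℝ := K * (2 + |α| / (α + β)) * b ^ γ * (v - a) ^ (α + β) with hB
  have hBC : B ≤ K * (2 + |α / (α + β)|) * b ^ γ * ((v - b) ^ (α + β) + (v - a) ^ (α + β)) := by
    rw [hc, hB]
    have h1 : (0:ℝ) ≤ (v - b) ^ (α + β) := Real.rpow_nonneg (by linarith) _
    have h2 : (0:ℝ) ≤ K * (2 + |α| / (α + β)) * b ^ γ :=
      mul_nonneg (mul_nonneg hK (by positivity)) (Real.rpow_nonneg (le_trans ha hab') _)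
    nlinarith
  have hmain : ∀ ε > (0:ℝ), |I| ≤ B + ε := by
    intro ε hε
    obtain ⟨δ, hδ, hconv⟩ := hI ε hε
    obtain ⟨N, hN⟩ := exists_nat_gt ((b - a) / δ)
    set n : ℕ := N + 1 with hn
    have hn0 : (0:ℝ) < (n : ℝ) := by positivity
    set c : ℝ := (b - a) / n with hcdef
    have hc0 : 0 < c := div_pos (by linarith) hn0
    set t : ℕ → ℝ := fun i => a + i * c with htdef
    have ht0 : t 0 = a := by simp [htdef]
    have htn : t n = b := by
      simp only [htdef, hcdef]
      field_simp
      ring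
    have hstep : ∀ i < n, t i < t (i+1) := by
      intro i _
      simp only [htdef]
      have : ((i:ℝ)+1) * c = i * c + c := by ring
      push_cast
      nlinarith
    have hmesh : ∀ i < n, t (i+1) - t i ≤ δ := by
      intro i _
      have he : t (i+1) - t i = c := by simp only [htdef]; push_cast; ring
      rw [he, hcdef]
      rw [div_le_iff₀ hn0]
      have : b - a < δ * N := by
        rw [div_lt_iff₀ hδ] at hN
        linarith
      have hNn : (N:ℝ) ≤ (n:ℝ) := by exact_mod_cast Nat.le_succ N
      nlinarith
    have htags : ∀ i < n, t i ≤ t i ∧ t i ≤ t (i+1) := fun i hi => ⟨le_rfl, (hstep i hi).le⟩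
    have hS := hconv n t t (Nat.succ_pos N) ht0 htn hstep hmesh htags
    have hSB : |∑ i ∈ Finset.range n, (t i) ^ γ * (v - t i) ^ α * (f (t (i+1)) - f (t i))| ≤ B :=
      sum_bound β γ α a b v K f N t hβ hγ hαβ ha hab hbv hK hf' ht0 htn hstep
    have hS' : |(∑ i ∈ Finset.range n, (t i) ^ γ * (v - t i) ^ α * (f (t (i+1)) - f (t i))) - I| ≤ ε := hS
    set S := ∑ i ∈ Finset.range n, (t i) ^ γ * (v - t i) ^ α * (f (t (i+1)) - f (t i)) with hSdef
    have h1 : |I| - |S| ≤ |I - S| := abs_sub_abs_le_abs_sub I S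
    have h2 : |I - S| = |S - I| := abs_sub_comm I S
    linarith
  have : |I| ≤ B := le_of_forall_pos_le_add hmain
  linarith
end

section
/- Let f ∈ C^β([0,T]) with 0 < β ≤ 1, and let α < 0 with α + β > 0. Define g(t) = ∫₀^t s^α df(s) (Riemann–Stieltjes integral). Then g is (α+β)-Hölder continuous on [0,T] with ‖g‖_{α+β} ≤ (β/(α+β)) ‖f‖_β. -/
section Aux
open Real Filter Set Finset

/-- Monotone shift: for `α < 0`, `0 ≤ y < a ≤ b`, `a^α - b^α ≤ (a-y)^α - (b-y)^α`. -/
lemma my_keyA {α : ℝ} (hα : α < 0) {y a b : ℝ} (hy : 0 ≤ y) (hya : y < a) (hab : a ≤ b) :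
    a ^ α - b ^ α ≤ (a - y) ^ α - (b - y) ^ α := by
  have hmain : MonotoneOn (fun s : ℝ => (a - s) ^ α - (b - s) ^ α) (Set.Icc 0 y) := by
    apply monotoneOn_of_deriv_nonneg (convex_Icc 0 y)
    · apply ContinuousOn.sub
      · apply ContinuousOn.rpow_const
        · exact (continuous_const.sub continuous_id).continuousOn
        · intro s hs
          exact Or.inl (by simp only [Set.mem_Icc] at hs; nlinarith [hs.2])
      · apply ContinuousOn.rpow_const
        · exact (continuous_const.sub continuous_id).continuousOn
        · intro s hs
          exact Or.inl (by simp only [Set.mem_Icc] at hs; nlinarith [hs.2])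
    · apply DifferentiableOn.sub
      · intro s hs
        rw [interior_Icc] at hs
        have h1 : a - s ≠ 0 := by nlinarith [hs.2]
        exact (((Real.hasDerivAt_rpow_const (p := α) (Or.inl h1)).comp s
          ((hasDerivAt_id s).const_sub a)).differentiableAt).differentiableWithinAt
      · intro s hs
        rw [interior_Icc] at hs
        have h1 : b - s ≠ 0 := by nlinarith [hs.2]
        exact (((Real.hasDerivAt_rpow_const (p := α) (Or.inl h1)).comp s
          ((hasDerivAt_id s).const_sub b)).differentiableAt).differentiableWithinAt
    · intro s hs
      rw [interior_Icc] at hs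
      have has : 0 < a - s := by nlinarith [hs.2]
      have hbs : 0 < b - s := by nlinarith [hs.2]
      have hda : HasDerivAt (fun s : ℝ => (a - s) ^ α) (α * (a - s) ^ (α - 1) * (-1)) s :=
        (Real.hasDerivAt_rpow_const (p := α) (Or.inl has.ne')).comp s
          ((hasDerivAt_id s).const_sub a)
      have hdb : HasDerivAt (fun s : ℝ => (b - s) ^ α) (α * (b - s) ^ (α - 1) * (-1)) s :=
        (Real.hasDerivAt_rpow_const (p := α) (Or.inl hbs.ne')).comp s
          ((hasDerivAt_id s).const_sub b)
      rw [(show HasDerivAt (fun s : ℝ => (a - s) ^ α - (b - s) ^ α)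
        (α * (a - s) ^ (α - 1) * (-1) - α * (b - s) ^ (α - 1) * (-1)) s from hda.sub hdb).deriv]
      have : (b - s) ^ (α - 1) ≤ (a - s) ^ (α - 1) :=
        Real.rpow_le_rpow_of_nonpos has (by linarith) (by linarith)
      nlinarith
  have := hmain (Set.left_mem_Icc.2 hy) (Set.right_mem_Icc.2 hy) hy
  simpa using this

/-- Key one-variable bound: `(u^α - v^α) u^β ≤ (-α)/(α+β) (v^(α+β) - u^(α+β))`. -/
lemma my_keyB {α β : ℝ} (hα : α < 0) (hβ : 0 < β) (hαβ : 0 < α + β)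
    {u v : ℝ} (hu : 0 < u) (huv : u ≤ v) :
    (u ^ α - v ^ α) * u ^ β ≤ (-α) / (α + β) * (v ^ (α + β) - u ^ (α + β)) := by
  have hmain : MonotoneOn (fun v : ℝ => (-α) / (α + β) * v ^ (α + β) + u ^ β * v ^ α)
      (Set.Ici u) := by
    apply monotoneOn_of_deriv_nonneg (convex_Ici u)
    · apply ContinuousOn.add
      · exact continuousOn_const.mul (ContinuousOn.rpow_const continuousOn_id
            (fun s hs => Or.inl (by simp only [Set.mem_Ici, id] at hs ⊢; nlinarith)))
      · exact continuousOn_const.mul (ContinuousOn.rpow_const continuousOn_id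
            (fun s hs => Or.inl (by simp only [Set.mem_Ici, id] at hs ⊢; nlinarith)))
    · intro s hs
      rw [interior_Ici] at hs
      have hs0 : s ≠ 0 := by simp only [Set.mem_Ioi] at hs; nlinarith
      exact ((((Real.hasDerivAt_rpow_const (p := α + β) (Or.inl hs0)).const_mul
        ((-α)/(α+β))).add ((Real.hasDerivAt_rpow_const (p := α)
        (Or.inl hs0)).const_mul (u ^ β))).differentiableAt).differentiableWithinAt
    · intro s hs
      rw [interior_Ici] at hs
      simp only [Set.mem_Ioi] at hs
      have hs0 : 0 < s := lt_trans hu hs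
      have hd : HasDerivAt (fun v : ℝ => (-α) / (α + β) * v ^ (α + β) + u ^ β * v ^ α)
          ((-α)/(α+β) * ((α+β) * s ^ (α + β - 1)) + u ^ β * (α * s ^ (α - 1))) s :=
        ((Real.hasDerivAt_rpow_const (p := α + β) (Or.inl hs0.ne')).const_mul _).add
          ((Real.hasDerivAt_rpow_const (p := α) (Or.inl hs0.ne')).const_mul _)
      rw [hd.deriv]
      have e1 : (-α)/(α+β) * ((α+β) * s ^ (α + β - 1)) = (-α) * (s ^ (α - 1) * s ^ β) := by
        rw [← Real.rpow_add hs0]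
        field_simp
        ring_nf
      have e2 : u ^ β ≤ s ^ β := Real.rpow_le_rpow hu.le hs.le hβ.le
      rw [e1]
      have h3 : 0 < s ^ (α - 1) := Real.rpow_pos_of_pos hs0 _
      nlinarith [mul_nonneg (mul_nonneg (neg_nonneg.2 hα.le) h3.le) (sub_nonneg.2 e2)]
  have h := hmain (show u ∈ Set.Ici u from Set.mem_Ici.2 le_rfl) (by simpa using huv) huv
  simp only at h
  have e : u ^ β * u ^ α = u ^ (α + β) := by
    rw [← Real.rpow_add hu]; ring_nf
  nlinarith [h]

/-- Combined: for `0 ≤ y < a ≤ b`, `(a^α - b^α)(a-y)^β ≤ (-α)/(α+β)((b-y)^(α+β) - (a-y)^(α+β))`. -/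
lemma my_keyC {α β : ℝ} (hα : α < 0) (hβ : 0 < β) (hαβ : 0 < α + β)
    {y a b : ℝ} (hy : 0 ≤ y) (hya : y < a) (hab : a ≤ b) :
    (a ^ α - b ^ α) * (a - y) ^ β
      ≤ (-α) / (α + β) * ((b - y) ^ (α + β) - (a - y) ^ (α + β)) := by
  have h1 := my_keyA hα hy hya hab
  have h2 := my_keyB hα hβ hαβ (u := a - y) (v := b - y) (by linarith) (by linarith)
  have h3 : (0:ℝ) ≤ (a - y) ^ β := Real.rpow_nonneg (by linarith) _
  nlinarith


lemma my_abel (a h : ℕ → ℝ) (n : ℕ) (hn : 0 < n) :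
    ∑ i ∈ Finset.range n, a (i + 1) * (h (i + 1) - h i)
      = a n * h n - a 1 * h 0 + ∑ i ∈ Finset.Ico 1 n, (a i - a (i + 1)) * h i := by
  induction n with
  | zero => omega
  | succ n ih =>
    rcases Nat.eq_zero_or_pos n with h0 | hpos
    · subst h0; simp [Finset.sum_range_one]; ring
    · rw [Finset.sum_range_succ, ih hpos, Finset.sum_Ico_succ_top hpos]
      ring

lemma my_discrete (α β K T : ℝ) (f : ℝ → ℝ)
    (hβ : 0 < β) (hα : α < 0) (hαβ : 0 < α + β) (hK : 0 ≤ K)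
    (hf : ∀ x ∈ Set.Icc (0:ℝ) T, ∀ y ∈ Set.Icc (0:ℝ) T, |f x - f y| ≤ K * |x - y| ^ β)
    (y : ℝ) (hy : 0 ≤ y) (n : ℕ) (hn : 0 < n) (t : ℕ → ℝ)
    (ht0y : y ≤ t 0) (ht0 : 0 < t 0)
    (hmono : ∀ i < n, t i < t (i + 1)) (htT : t n ≤ T) :
    |∑ i ∈ Finset.range n, (t (i + 1)) ^ α * (f (t (i + 1)) - f (t i))|
      ≤ β / (α + β) * K * (t n - y) ^ (α + β) + K * (t 0 - y) ^ (α + β) := by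
  -- monotonicity of partition points
  have tmono : ∀ i j, i ≤ j → j ≤ n → t i ≤ t j := by
    intro i j hij hjn
    induction j with
    | zero => simp_all
    | succ j ih =>
      rcases Nat.eq_or_lt_of_le hij with h | h
      · simp [← h]
      · exact le_trans (ih (by omega) (by omega)) (hmono j (by omega)).le
  have tpos : ∀ i, i ≤ n → 0 < t i := fun i hi => lt_of_lt_of_le ht0 (tmono 0 i (Nat.zero_le _) hi)
  have tmem : ∀ i, i ≤ n → t i ∈ Set.Icc (0:ℝ) T :=
    fun i hi => ⟨(tpos i hi).le, le_trans (tmono i n hi le_rfl) htT⟩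
  have hymem : y ∈ Set.Icc (0:ℝ) T := ⟨hy, le_trans ht0y (tmem 0 (by omega)).2⟩
  have htny : y < t n := lt_of_le_of_lt ht0y (by
    calc t 0 < t 1 := hmono 0 hn
    _ ≤ t n := tmono 1 n hn le_rfl)
  -- rewrite differences of f as differences of h
  have hsum : ∑ i ∈ Finset.range n, (t (i + 1)) ^ α * (f (t (i + 1)) - f (t i))
      = ∑ i ∈ Finset.range n, (fun i => (t i) ^ α) (i + 1)
        * ((fun i => f (t i) - f y) (i + 1) - (fun i => f (t i) - f y) i) := by
    apply Finset.sum_congr rfl; intro i _; dsimp only; ring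
  rw [hsum, my_abel (fun i => (t i) ^ α) (fun i => f (t i) - f y) n hn]
  -- bound the three pieces
  set F : ℕ → ℝ := fun i => (t i - y) ^ (α + β) with hF
  have hb1 : (t n) ^ α * |f (t n) - f y| ≤ K * F n := by
    have h1 : (t n) ^ α ≤ (t n - y) ^ α :=
      Real.rpow_le_rpow_of_nonpos (by linarith) (by linarith) hα.le
    have h2 : |f (t n) - f y| ≤ K * (t n - y) ^ β := by
      have := hf (t n) (tmem n le_rfl) y hymem
      rwa [abs_of_pos (by linarith : (0:ℝ) < t n - y)] at this
    have h3 : (0:ℝ) ≤ (t n) ^ α := (Real.rpow_pos_of_pos (tpos n le_rfl) _).le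
    calc (t n) ^ α * |f (t n) - f y| ≤ (t n - y) ^ α * (K * (t n - y) ^ β) := by
          apply mul_le_mul h1 h2 (abs_nonneg _) (Real.rpow_nonneg (by linarith) _)
      _ = K * F n := by
          simp only [hF]; rw [show (t n - y) ^ (α+β) = (t n - y) ^ α * (t n - y) ^ β from
            Real.rpow_add (by linarith) α β]; ring
  have hb2 : (t 1) ^ α * |f (t 0) - f y| ≤ K * F 0 := by
    rcases eq_or_lt_of_le ht0y with h | h
    · simp [← h, hF]
      rw [Real.zero_rpow hαβ.ne']
      simp [mul_nonneg (Real.rpow_pos_of_pos (tpos 1 hn) α).le]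
    · have h1 : (t 1) ^ α ≤ (t 0 - y) ^ α :=
        Real.rpow_le_rpow_of_nonpos (by linarith) (by linarith [hmono 0 hn]) hα.le
      have h2 : |f (t 0) - f y| ≤ K * (t 0 - y) ^ β := by
        have := hf (t 0) (tmem 0 (by omega)) y hymem
        rwa [abs_of_pos (by linarith : (0:ℝ) < t 0 - y)] at this
      calc (t 1) ^ α * |f (t 0) - f y| ≤ (t 0 - y) ^ α * (K * (t 0 - y) ^ β) := by
            apply mul_le_mul h1 h2 (abs_nonneg _) (Real.rpow_nonneg (by linarith) _)
        _ = K * F 0 := by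
            simp only [hF]; rw [show (t 0 - y) ^ (α+β) = (t 0 - y) ^ α * (t 0 - y) ^ β from
              Real.rpow_add (by linarith) α β]; ring
  have hb3 : ∑ i ∈ Finset.Ico 1 n, |((t i) ^ α - (t (i+1)) ^ α) * (f (t i) - f y)|
      ≤ (-α) / (α + β) * K * (F n - F 1) := by
    have step : ∀ i ∈ Finset.Ico 1 n, |((t i) ^ α - (t (i+1)) ^ α) * (f (t i) - f y)|
        ≤ K * ((-α) / (α + β) * (F (i+1) - F i)) := by
      intro i hi
      simp only [Finset.mem_Ico] at hi
      have hyi : y < t i := lt_of_le_of_lt ht0y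
        (lt_of_lt_of_le (hmono 0 hn) (tmono 1 i hi.1 (by omega)))
      have hii : t i ≤ t (i+1) := (hmono i hi.2).le
      have hC := my_keyC hα hβ hαβ hy hyi hii
      have h2 : |f (t i) - f y| ≤ K * (t i - y) ^ β := by
        have := hf (t i) (tmem i (by omega)) y hymem
        rwa [abs_of_pos (by linarith : (0:ℝ) < t i - y)] at this
      have h1 : (0:ℝ) ≤ (t i) ^ α - (t (i+1)) ^ α := by
        have := Real.rpow_le_rpow_of_nonpos (tpos i (by omega)) hii hα.le
        linarith
      rw [abs_mul, abs_of_nonneg h1]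
      calc ((t i) ^ α - (t (i+1)) ^ α) * |f (t i) - f y|
          ≤ ((t i) ^ α - (t (i+1)) ^ α) * (K * (t i - y) ^ β) :=
            mul_le_mul_of_nonneg_left h2 h1
        _ = K * (((t i) ^ α - (t (i+1)) ^ α) * (t i - y) ^ β) := by ring
        _ ≤ K * ((-α) / (α + β) * (F (i+1) - F i)) := mul_le_mul_of_nonneg_left hC hK
    calc ∑ i ∈ Finset.Ico 1 n, |((t i) ^ α - (t (i+1)) ^ α) * (f (t i) - f y)|
        ≤ ∑ i ∈ Finset.Ico 1 n, K * ((-α) / (α + β) * (F (i+1) - F i)) :=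
          Finset.sum_le_sum step
      _ = K * ((-α) / (α + β)) * ∑ i ∈ Finset.Ico 1 n, (F (i+1) - F i) := by
          rw [Finset.mul_sum]; apply Finset.sum_congr rfl; intro i _; ring
      _ = K * ((-α) / (α + β)) * (F n - F 1) := by
          congr 1
          rw [Finset.sum_Ico_eq_sum_range]
          have : ∀ m : ℕ, ∑ i ∈ Finset.range m, (F (1 + i + 1) - F (1 + i)) = F (1 + m) - F 1 := by
            intro m
            induction m with
            | zero => simp
            | succ m ih => rw [Finset.sum_range_succ, ih]; ring_nf
          rw [this, show 1 + (n - 1) = n from by omega]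
      _ = (-α) / (α + β) * K * (F n - F 1) := by ring
  have hF1 : 0 ≤ F 1 := Real.rpow_nonneg (by linarith [hmono 0 hn]) _
  have hFn : 0 ≤ F n := Real.rpow_nonneg (by linarith) _
  have habs := abs_sum_le_sum_abs (fun i => ((t i) ^ α - (t (i+1)) ^ α) * (f (t i) - f y))
    (Finset.Ico 1 n)
  have e1 : |(t n) ^ α * (f (t n) - f y)| = (t n) ^ α * |f (t n) - f y| := by
    rw [abs_mul, abs_of_nonneg (Real.rpow_pos_of_pos (tpos n le_rfl) α).le]
  have e2 : |(t 1) ^ α * (f (t 0) - f y)| = (t 1) ^ α * |f (t 0) - f y| := by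
    rw [abs_mul, abs_of_nonneg (Real.rpow_pos_of_pos (tpos 1 hn) α).le]
  have key : |(t n) ^ α * (f (t n) - f y) - (t 1) ^ α * (f (t 0) - f y)
      + ∑ i ∈ Finset.Ico 1 n, ((t i) ^ α - (t (i+1)) ^ α) * (f (t i) - f y)|
      ≤ K * F n + K * F 0 + (-α) / (α + β) * K * (F n - F 1) := by
    calc |(t n) ^ α * (f (t n) - f y) - (t 1) ^ α * (f (t 0) - f y)
        + ∑ i ∈ Finset.Ico 1 n, ((t i) ^ α - (t (i+1)) ^ α) * (f (t i) - f y)|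
        ≤ |(t n) ^ α * (f (t n) - f y)| + |(t 1) ^ α * (f (t 0) - f y)|
          + |∑ i ∈ Finset.Ico 1 n, ((t i) ^ α - (t (i+1)) ^ α) * (f (t i) - f y)| := by
          exact (abs_add_le _ _).trans (by gcongr ?_ + _; exact abs_sub _ _)
      _ ≤ K * F n + K * F 0 + (-α) / (α + β) * K * (F n - F 1) := by
          rw [e1, e2]
          have := add_le_add (add_le_add hb1 hb2) (habs.trans hb3)
          linarith
  refine key.trans ?_
  have hfinal : K * F n + K * F 0 + (-α) / (α + β) * K * (F n - F 1)
      ≤ β / (α + β) * K * F n + K * F 0 := by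
    have h1 : (-α) / (α + β) * K * (F n - F 1) ≤ (-α) / (α + β) * K * F n := by
      apply mul_le_mul_of_nonneg_left (by linarith)
      exact mul_nonneg (div_nonneg (neg_nonneg.2 hα.le) hαβ.le) hK
    have h2 : K * F n + (-α) / (α + β) * K * F n = β / (α + β) * K * F n := by
      field_simp
      ring
    linarith
  exact hfinal


noncomputable def myPt (a b : ℝ) (m : ℕ) (i : ℕ) : ℝ := a + i * ((b - a) / m)

lemma myPt_zero (a b : ℝ) (m : ℕ) : myPt a b m 0 = a := by simp [myPt]

lemma myPt_last (a b : ℝ) (m : ℕ) (hm : 0 < m) : myPt a b m m = b := by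
  have : (m:ℝ) ≠ 0 := Nat.cast_ne_zero.2 hm.ne'
  unfold myPt
  rw [mul_comm, div_mul_cancel₀ (b - a) this]
  ring

lemma myPt_step (a b : ℝ) (m : ℕ) (i : ℕ) :
    myPt a b m (i + 1) - myPt a b m i = (b - a) / m := by
  simp only [myPt]
  push_cast
  ring

lemma myPt_mesh {a b δ : ℝ} (hab : a < b) (hδ : 0 < δ) :
    0 < (b - a) / (⌈(b - a) / δ⌉₊ : ℝ) ∧ (b - a) / (⌈(b - a) / δ⌉₊ : ℝ) ≤ δ ∧
      0 < ⌈(b - a) / δ⌉₊ := by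
  have hba : 0 < b - a := sub_pos.2 hab
  have hk : 0 < ⌈(b - a) / δ⌉₊ := Nat.ceil_pos.2 (div_pos hba hδ)
  have hkR : (0:ℝ) < (⌈(b - a) / δ⌉₊ : ℝ) := Nat.cast_pos.2 hk
  refine ⟨div_pos hba hkR, ?_, hk⟩
  rw [div_le_iff₀ hkR]
  calc b - a = δ * ((b - a) / δ) := by field_simp
    _ ≤ δ * (⌈(b - a) / δ⌉₊ : ℝ) := by
        exact mul_le_mul_of_nonneg_left (Nat.le_ceil _) hδ.le

end Aux



/-- Lemma A.5 of the paper: if `f` is `β`-Hölder on `[0,T]`, `α < 0`, `α + β > 0`, and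
`g(t) = ∫₀^t s^α df(s)` (improper Riemann–Stieltjes integral, limit of `∫_c^t` as
`c → 0⁺`), then `g` is `(α+β)`-Hölder with seminorm at most `(β/(α+β)) ‖f‖_β`. -/
theorem stmt5 (T β α K : ℝ) (f g : ℝ → ℝ) (G : ℝ → ℝ → ℝ)
    (hβ : 0 < β) (hβ1 : β ≤ 1) (hα : α < 0) (hαβ : 0 < α + β) (hT : 0 < T)
    (hK : 0 ≤ K)
    (hf : ∀ x ∈ Set.Icc (0:ℝ) T, ∀ y ∈ Set.Icc (0:ℝ) T, |f x - f y| ≤ K * |x - y| ^ β)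
    (hG : ∀ t ∈ Set.Ioc (0:ℝ) T, ∀ c ∈ Set.Ioo (0:ℝ) t,
      RSIntegral (fun s => s ^ α) f c t (G c t))
    (hg : ∀ t ∈ Set.Ioc (0:ℝ) T,
      Filter.Tendsto (fun c => G c t) (nhdsWithin 0 (Set.Ioi 0)) (nhds (g t)))
    (hg0 : g 0 = 0) :
    ∀ x ∈ Set.Icc (0:ℝ) T, ∀ y ∈ Set.Icc (0:ℝ) T,
      |g x - g y| ≤ (β / (α + β)) * K * |x - y| ^ (α + β) := by
  have key : ∀ x ∈ Set.Icc (0:ℝ) T, ∀ y ∈ Set.Icc (0:ℝ) T, y < x →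
      |g x - g y| ≤ β / (α + β) * K * (x - y) ^ (α + β) := by
    intro x hx y hy hyx
    refine le_of_forall_pos_le_add ?_
    intro ε hε
    have hx0 : 0 < x := lt_of_le_of_lt hy.1 hyx
    have hxT : x ∈ Set.Ioc (0:ℝ) T := ⟨hx0, hx.2⟩
    set B := β / (α + β) * K * (x - y) ^ (α + β) with hB
    rcases eq_or_lt_of_le hy.1 with hy0 | hy0
    · -- case y = 0
      have hgy : g y = 0 := by rw [← hy0, hg0]
      rw [hgy, sub_zero]
      have htend : Filter.Tendsto (fun c => |G c x|) (nhdsWithin 0 (Set.Ioi 0))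
          (nhds |g x|) := (hg x hxT).abs
      refine le_of_tendsto htend ?_
      have ev1 : ∀ᶠ c in nhdsWithin (0:ℝ) (Set.Ioi 0), c ∈ Set.Ioo (0:ℝ) x :=
        Filter.eventually_of_mem (Ioo_mem_nhdsGT_of_mem ⟨le_rfl, hx0⟩) (fun c hc => hc)
      have ev2 : ∀ᶠ c in nhdsWithin (0:ℝ) (Set.Ioi 0), K * c ^ (α + β) < ε / 2 := by
        have htend2 : Filter.Tendsto (fun c : ℝ => K * c ^ (α + β))
            (nhdsWithin 0 (Set.Ioi 0)) (nhds (K * (0:ℝ) ^ (α + β))) :=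
          ((continuousAt_const.mul
            (Real.continuousAt_rpow_const 0 (α + β) (Or.inr hαβ.le))).tendsto).mono_left
            nhdsWithin_le_nhds
        rw [Real.zero_rpow hαβ.ne', mul_zero] at htend2
        exact htend2.eventually_lt_const (by positivity)
      filter_upwards [ev1, ev2] with c hc hcε
      obtain ⟨δ, hδ, spec⟩ := hG x hxT c hc (ε / 2) (by positivity)
      obtain ⟨hstep, hmesh, hk⟩ := myPt_mesh hc.2 hδ
      set k := ⌈(x - c) / δ⌉₊ with hkdef
      set t : ℕ → ℝ := myPt c x k with htdef
      have ht0 : t 0 = c := myPt_zero c x k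
      have htk : t k = x := myPt_last c x k hk
      have hmon : ∀ i < k, t i < t (i + 1) := by
        intro i _
        have := myPt_step c x k i
        rw [← htdef] at this
        linarith
      have hmesh' : ∀ i < k, t (i + 1) - t i ≤ δ := by
        intro i _
        have := myPt_step c x k i
        rw [← htdef] at this
        linarith
      have hS := spec k t (fun i => t (i + 1)) hk ht0 htk hmon hmesh'
        (fun i hi => ⟨(hmon i hi).le, le_refl _⟩)
      have hD := my_discrete α β K T f hβ hα hαβ hK hf 0 le_rfl k hk t
        (by rw [ht0]; exact hc.1.le) (by rw [ht0]; exact hc.1) hmon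
        (by rw [htk]; exact hx.2)
      rw [htk, ht0, sub_zero, sub_zero] at hD
      have hS' : |(∑ i ∈ Finset.range k, (t (i + 1)) ^ α * (f (t (i + 1)) - f (t i)))
          - G c x| ≤ ε / 2 := hS
      calc |G c x| ≤ |(∑ i ∈ Finset.range k, (t (i + 1)) ^ α * (f (t (i + 1)) - f (t i)))
            - G c x| + |∑ i ∈ Finset.range k, (t (i + 1)) ^ α * (f (t (i + 1)) - f (t i))| := by
            have := abs_sub_abs_le_abs_sub (G c x)
              (∑ i ∈ Finset.range k, (t (i + 1)) ^ α * (f (t (i + 1)) - f (t i)))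
            have h2 := abs_sub_comm (G c x)
              (∑ i ∈ Finset.range k, (t (i + 1)) ^ α * (f (t (i + 1)) - f (t i)))
            linarith
        _ ≤ ε / 2 + (β / (α + β) * K * x ^ (α + β) + K * c ^ (α + β)) := by
            linarith
        _ ≤ B + ε := by
            rw [hB, ← hy0, sub_zero]
            linarith
    · -- case 0 < y
      have hyT : y ∈ Set.Ioc (0:ℝ) T := ⟨hy0, hy.2⟩
      have htend : Filter.Tendsto (fun c => |G c x - G c y|) (nhdsWithin 0 (Set.Ioi 0))
          (nhds |g x - g y|) := ((hg x hxT).sub (hg y hyT)).abs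
      refine le_of_tendsto htend ?_
      have ev1 : ∀ᶠ c in nhdsWithin (0:ℝ) (Set.Ioi 0), c ∈ Set.Ioo (0:ℝ) y :=
        Filter.eventually_of_mem (Ioo_mem_nhdsGT_of_mem ⟨le_rfl, hy0⟩) (fun c hc => hc)
      filter_upwards [ev1] with c hc
      obtain ⟨δ1, hδ1, spec1⟩ := hG x hxT c ⟨hc.1, hc.2.trans hyx⟩ (ε / 2) (by positivity)
      obtain ⟨δ2, hδ2, spec2⟩ := hG y hyT c hc (ε / 2) (by positivity)
      set δ := min δ1 δ2 with hδdef
      have hδ : 0 < δ := lt_min hδ1 hδ2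
      obtain ⟨hstep1, hmesh1, hm⟩ := myPt_mesh hc.2 hδ
      obtain ⟨hstep2, hmesh2, hk⟩ := myPt_mesh hyx hδ
      set m := ⌈(y - c) / δ⌉₊ with hmdef
      set k := ⌈(x - y) / δ⌉₊ with hkdef
      set t : ℕ → ℝ := fun i => if i ≤ m then myPt c y m i else myPt y x k (i - m) with htdef
      have hfirst : ∀ i, i ≤ m → t i = myPt c y m i := fun i hi => if_pos hi
      have hmid : ∀ i, m ≤ i → t i = myPt y x k (i - m) := by
        intro i hi
        rcases eq_or_lt_of_le hi with h | h
        · rw [← h, hfirst m le_rfl, myPt_last c y m hm, Nat.sub_self, myPt_zero]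
        · rw [htdef]; simp only; rw [if_neg (by omega)]
      have ht0 : t 0 = c := by rw [hfirst 0 (Nat.zero_le _), myPt_zero]
      have htn : t (m + k) = x := by
        rw [hmid (m + k) (Nat.le_add_right _ _), Nat.add_sub_cancel_left, myPt_last y x k hk]
      have hstepfact : ∀ i < m + k,
          t (i + 1) - t i = (y - c) / m ∨ t (i + 1) - t i = (x - y) / k := by
        intro i hi
        rcases lt_or_ge i m with h | h
        · left
          rw [hfirst (i + 1) (by omega), hfirst i (by omega)]
          exact myPt_step c y m i
        · right
          rw [hmid (i + 1) (by omega), hmid i h, show i + 1 - m = (i - m) + 1 from by omega]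
          exact myPt_step y x k (i - m)
      have hmon : ∀ i < m + k, t i < t (i + 1) := by
        intro i hi
        rcases hstepfact i hi with h | h <;> linarith
      have hmesh' : ∀ i < m + k, t (i + 1) - t i ≤ δ1 := by
        intro i hi
        rcases hstepfact i hi with h | h
        · rw [h]; exact hmesh1.trans (min_le_left _ _)
        · rw [h]; exact hmesh2.trans (min_le_left _ _)
      have hSfull := spec1 (m + k) t (fun i => t (i + 1)) (by omega) ht0 htn hmon hmesh'
        (fun i hi => ⟨(hmon i hi).le, le_refl _⟩)
      have hmon2 : ∀ i < m, myPt c y m i < myPt c y m (i + 1) := by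
        intro i _; have := myPt_step c y m i; linarith
      have hS1 := spec2 m (myPt c y m) (fun i => myPt c y m (i + 1)) hm (myPt_zero c y m)
        (myPt_last c y m hm) hmon2
        (fun i _ => by rw [myPt_step]; exact hmesh1.trans (min_le_right _ _))
        (fun i hi => ⟨(hmon2 i hi).le, le_refl _⟩)
      have hmon3 : ∀ i < k, myPt y x k i < myPt y x k (i + 1) := by
        intro i _; have := myPt_step y x k i; linarith
      have hD := my_discrete α β K T f hβ hα hαβ hK hf y hy.1 k hk (myPt y x k)
        (le_of_eq (myPt_zero y x k).symm) (by rw [myPt_zero]; exact hy0) hmon3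
        (by rw [myPt_last y x k hk]; exact hx.2)
      rw [myPt_last y x k hk, myPt_zero, sub_self, Real.zero_rpow hαβ.ne', mul_zero,
        add_zero] at hD
      set S1 := ∑ i ∈ Finset.range m,
        (myPt c y m (i + 1)) ^ α * (f (myPt c y m (i + 1)) - f (myPt c y m i)) with hS1def
      set S2 := ∑ j ∈ Finset.range k,
        (myPt y x k (j + 1)) ^ α * (f (myPt y x k (j + 1)) - f (myPt y x k j)) with hS2def
      have hsplit : ∑ i ∈ Finset.range (m + k), (t (i + 1)) ^ α * (f (t (i + 1)) - f (t i))
          = S1 + S2 := by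
        rw [Finset.sum_range_add]
        congr 1
        · apply Finset.sum_congr rfl
          intro i hi
          simp only [Finset.mem_range] at hi
          rw [hfirst (i + 1) (by omega), hfirst i (by omega)]
        · apply Finset.sum_congr rfl
          intro j _
          rw [hmid (m + j + 1) (by omega), hmid (m + j) (by omega),
            show m + j + 1 - m = j + 1 from by omega, show m + j - m = j from by omega]
      have a1 : |S1 + S2 - G c x| ≤ ε / 2 := by
        rw [← hsplit]; exact hSfull
      have a2 : |S1 - G c y| ≤ ε / 2 := hS1
      have a3 : |S2| ≤ B := hD
      obtain ⟨b1, b2⟩ := abs_le.1 a1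
      obtain ⟨b3, b4⟩ := abs_le.1 a2
      obtain ⟨b5, b6⟩ := abs_le.1 a3
      rw [abs_le]
      constructor <;> linarith
  intro x hx y hy
  rcases lt_trichotomy y x with h | h | h
  · have h2 := key x hx y hy h
    rwa [abs_of_pos (sub_pos.2 h)]
  · rw [h]
    simp [Real.zero_rpow hαβ.ne']
  · have h2 := key y hy x hx h
    rw [abs_sub_comm (g x) (g y), abs_sub_comm x y]
    rwa [abs_of_pos (sub_pos.2 h)]
end

section
/- Let α ∈ (-1/2, 0), β ∈ (0,1] with 0 < 2α + β ≤ 1, f ∈ C^β([0,T]), and define g(t) = ∫₀^t s^α (t-s)^α df(s). Then there is a constant C depending only on α, β such that |g(b) - g(a)| ≤ C ‖f‖_β (b-a)^{2α+β} for all 0 ≤ a < b ≤ T; i.e., g ∈ C^{2α+β}([0,T]). -/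
namespace Prop6

open Finset Set

/-- Riemann–Stieltjes sum with left-endpoint tags. -/
def RSum (f ψ : ℝ → ℝ) (t : ℕ → ℝ) (n : ℕ) : ℝ :=
  ∑ i ∈ Finset.range n, ψ (t i) * (f (t (i + 1)) - f (t i))

structure IsPart (t : ℕ → ℝ) (n : ℕ) (u v δ : ℝ) : Prop where
  pos : 0 < n
  left : t 0 = u
  right : t n = v
  lt : ∀ i < n, t i < t (i + 1)
  mesh : ∀ i < n, t (i + 1) - t i ≤ δ

namespace IsPart

lemma mono {t : ℕ → ℝ} {n : ℕ} {u v δ : ℝ} (h : IsPart t n u v δ) {i j : ℕ}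
    (hij : i ≤ j) (hj : j ≤ n) : t i ≤ t j := by
  have key : ∀ d i, i + d ≤ n → t i ≤ t (i + d) := by
    intro d
    induction d with
    | zero => intro i _; simp
    | succ d ih =>
      intro i hle
      calc t i ≤ t (i + d) := ih i (by omega)
        _ ≤ t (i + d + 1) := (h.lt _ (by omega)).le
  obtain ⟨d, rfl⟩ := Nat.exists_eq_add_of_le hij
  exact key d i hj

lemma mem {t : ℕ → ℝ} {n : ℕ} {u v δ : ℝ} (h : IsPart t n u v δ) {i : ℕ}
    (hi : i ≤ n) : t i ∈ Set.Icc u v := by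
  constructor
  · rw [← h.left]; exact h.mono (Nat.zero_le _) hi
  · rw [← h.right]; exact h.mono hi le_rfl

lemma ord {t : ℕ → ℝ} {n : ℕ} {u v δ : ℝ} (h : IsPart t n u v δ) :
    ∀ i < n, t i ≤ t (i + 1) := fun i hi => (h.lt i hi).le

lemma le {t : ℕ → ℝ} {n : ℕ} {u v δ : ℝ} (h : IsPart t n u v δ) : u ≤ v := by
  have := h.mem (Nat.zero_le n)
  rw [h.left] at this; exact this.2

end IsPart

/-- Concatenation of two partitions. -/
def cat (t₁ t₂ : ℕ → ℝ) (n₁ : ℕ) : ℕ → ℝ := fun i => if i < n₁ then t₁ i else t₂ (i - n₁)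

lemma cat_eq₁ {t₁ t₂ : ℕ → ℝ} {n₁ : ℕ} (hend : t₁ n₁ = t₂ 0) {i : ℕ} (hi : i ≤ n₁) :
    cat t₁ t₂ n₁ i = t₁ i := by
  rcases lt_or_eq_of_le hi with hlt | rfl
  · simp [cat, hlt]
  · simp [cat, hend]

lemma cat_eq₂ {t₁ t₂ : ℕ → ℝ} {n₁ : ℕ} {i : ℕ} (hi : n₁ ≤ i) :
    cat t₁ t₂ n₁ i = t₂ (i - n₁) := by
  have : ¬ i < n₁ := by omega
  simp [cat, this]

lemma cat_isPart {t₁ t₂ : ℕ → ℝ} {n₁ n₂ : ℕ} {u v w δ : ℝ}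
    (h₁ : IsPart t₁ n₁ u v δ) (h₂ : IsPart t₂ n₂ v w δ) :
    IsPart (cat t₁ t₂ n₁) (n₁ + n₂) u w δ := by
  have hend : t₁ n₁ = t₂ 0 := by rw [h₁.right, h₂.left]
  have e1 : ∀ {i}, i ≤ n₁ → cat t₁ t₂ n₁ i = t₁ i := fun h => cat_eq₁ hend h
  constructor
  · have := h₁.pos; omega
  · rw [e1 (Nat.zero_le _), h₁.left]
  · rw [cat_eq₂ (by omega)]
    have : n₁ + n₂ - n₁ = n₂ := by omega
    rw [this, h₂.right]
  · intro i hi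
    by_cases hc : i < n₁
    · rw [e1 hc.le, e1 (by omega)]; exact h₁.lt i hc
    · rw [cat_eq₂ (by omega), cat_eq₂ (by omega)]
      have : i + 1 - n₁ = (i - n₁) + 1 := by omega
      rw [this]; exact h₂.lt _ (by omega)
  · intro i hi
    by_cases hc : i < n₁
    · rw [e1 hc.le, e1 (by omega)]; exact h₁.mesh i hc
    · rw [cat_eq₂ (by omega), cat_eq₂ (by omega)]
      have : i + 1 - n₁ = (i - n₁) + 1 := by omega
      rw [this]; exact h₂.mesh _ (by omega)

lemma cat_rsum {t₁ t₂ : ℕ → ℝ} {n₁ n₂ : ℕ} (f ψ : ℝ → ℝ) (hend : t₁ n₁ = t₂ 0) :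
    RSum f ψ (cat t₁ t₂ n₁) (n₁ + n₂) = RSum f ψ t₁ n₁ + RSum f ψ t₂ n₂ := by
  unfold RSum
  rw [Finset.sum_range_add]
  congr 1
  · refine Finset.sum_congr rfl fun i hi => ?_
    have hi' : i < n₁ := Finset.mem_range.mp hi
    rw [cat_eq₁ hend hi'.le, cat_eq₁ hend (by omega)]
  · refine Finset.sum_congr rfl fun i _ => ?_
    rw [cat_eq₂ (by omega), cat_eq₂ (by omega)]
    have e1 : n₁ + i - n₁ = i := by omega
    have e2 : n₁ + i + 1 - n₁ = i + 1 := by omega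
    rw [e1, e2]

lemma rsum_sub (f ψ χ : ℝ → ℝ) (t : ℕ → ℝ) (n : ℕ) :
    RSum f (fun s => ψ s - χ s) t n = RSum f ψ t n - RSum f χ t n := by
  unfold RSum
  rw [← Finset.sum_sub_distrib]
  exact Finset.sum_congr rfl fun i _ => by ring

lemma rsum_congr {ψ χ : ℝ → ℝ} (f : ℝ → ℝ) (t : ℕ → ℝ) (n : ℕ)
    (h : ∀ s, ψ s = χ s) : RSum f ψ t n = RSum f χ t n := by
  unfold RSum
  exact Finset.sum_congr rfl fun i _ => by rw [h]

/-- Bounded variation along monotone chains. -/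
def ChainVar (ψ : ℝ → ℝ) (u v V : ℝ) : Prop :=
  ∀ (m : ℕ) (x : ℕ → ℝ), (∀ i ≤ m, x i ∈ Set.Icc u v) → (∀ i < m, x i ≤ x (i + 1)) →
    ∑ i ∈ Finset.range m, |ψ (x (i + 1)) - ψ (x i)| ≤ V

lemma ChainVar.mono' {ψ : ℝ → ℝ} {u v V V' : ℝ} (h : ChainVar ψ u v V) (hVV : V ≤ V') :
    ChainVar ψ u v V' := fun m x h1 h2 => (h m x h1 h2).trans hVV

lemma chainVar_two {ψ : ℝ → ℝ} {u v M : ℝ}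
    (hmono : MonotoneOn ψ (Set.Icc u v) ∨ AntitoneOn ψ (Set.Icc u v))
    (hM : ∀ s ∈ Set.Icc u v, |ψ s| ≤ M) : ChainVar ψ u v (2 * M) := by
  intro m x hx hord
  rcases hmono with hm | hm
  · have : ∀ i ∈ Finset.range m, |ψ (x (i + 1)) - ψ (x i)| = ψ (x (i + 1)) - ψ (x i) := by
      intro i hi
      have hi' : i < m := Finset.mem_range.mp hi
      exact abs_of_nonneg (sub_nonneg.mpr (hm (hx i hi'.le) (hx (i+1) hi') (hord i hi')))
    rw [Finset.sum_congr rfl this, Finset.sum_range_sub (fun i => ψ (x i))]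
    have h1 := (le_abs_self _).trans (hM _ (hx m le_rfl))
    have h2 := (neg_le_abs _).trans (hM _ (hx 0 (Nat.zero_le _)))
    linarith
  · have : ∀ i ∈ Finset.range m, |ψ (x (i + 1)) - ψ (x i)| = ψ (x i) - ψ (x (i + 1)) := by
      intro i hi
      have hi' : i < m := Finset.mem_range.mp hi
      rw [abs_sub_comm]
      exact abs_of_nonneg (sub_nonneg.mpr (hm (hx i hi'.le) (hx (i+1) hi') (hord i hi')))
    rw [Finset.sum_congr rfl this, Finset.sum_range_sub' (fun i => ψ (x i))]
    have h1 := (le_abs_self _).trans (hM _ (hx 0 (Nat.zero_le _)))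
    have h2 := (neg_le_abs _).trans (hM _ (hx m le_rfl))
    linarith

lemma chainVar_mul {ψ₁ ψ₂ : ℝ → ℝ} {u v V₁ V₂ M₁ M₂ : ℝ} (huv : u ≤ v)
    (h₁ : ChainVar ψ₁ u v V₁) (h₂ : ChainVar ψ₂ u v V₂)
    (hM₁ : ∀ s ∈ Set.Icc u v, |ψ₁ s| ≤ M₁) (hM₂ : ∀ s ∈ Set.Icc u v, |ψ₂ s| ≤ M₂) :
    ChainVar (fun s => ψ₁ s * ψ₂ s) u v (M₁ * V₂ + M₂ * V₁) := by
  intro m x hx hord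
  have hM₁0 : 0 ≤ M₁ := (abs_nonneg _).trans (hM₁ u ⟨le_rfl, huv⟩)
  have hM₂0 : 0 ≤ M₂ := (abs_nonneg _).trans (hM₂ u ⟨le_rfl, huv⟩)
  calc ∑ i ∈ Finset.range m, |ψ₁ (x (i+1)) * ψ₂ (x (i+1)) - ψ₁ (x i) * ψ₂ (x i)|
      ≤ ∑ i ∈ Finset.range m,
        (M₁ * |ψ₂ (x (i+1)) - ψ₂ (x i)| + M₂ * |ψ₁ (x (i+1)) - ψ₁ (x i)|) := by
        refine Finset.sum_le_sum fun i hi => ?_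
        have hi' : i < m := Finset.mem_range.mp hi
        have key : ψ₁ (x (i+1)) * ψ₂ (x (i+1)) - ψ₁ (x i) * ψ₂ (x i)
            = ψ₁ (x (i+1)) * (ψ₂ (x (i+1)) - ψ₂ (x i)) + ψ₂ (x i) * (ψ₁ (x (i+1)) - ψ₁ (x i)) := by
          ring
        rw [key]
        calc |_| ≤ |ψ₁ (x (i+1)) * (ψ₂ (x (i+1)) - ψ₂ (x i))| +
              |ψ₂ (x i) * (ψ₁ (x (i+1)) - ψ₁ (x i))| := abs_add_le _ _
          _ ≤ M₁ * |ψ₂ (x (i+1)) - ψ₂ (x i)| + M₂ * |ψ₁ (x (i+1)) - ψ₁ (x i)| := by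
              rw [abs_mul, abs_mul]
              gcongr
              · exact hM₁ _ (hx (i+1) hi')
              · exact hM₂ _ (hx i hi'.le)
      _ = M₁ * (∑ i ∈ Finset.range m, |ψ₂ (x (i+1)) - ψ₂ (x i)|)
          + M₂ * (∑ i ∈ Finset.range m, |ψ₁ (x (i+1)) - ψ₁ (x i)|) := by
          rw [Finset.sum_add_distrib, Finset.mul_sum, Finset.mul_sum]
      _ ≤ M₁ * V₂ + M₂ * V₁ := by
          gcongr
          · exact h₂ m x hx hord
          · exact h₁ m x hx hord


/-- Abel-summation estimate for a Riemann–Stieltjes sum against a Hölder function. -/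
lemma master {T K β : ℝ} (f ψ : ℝ → ℝ) (hK : 0 ≤ K) (hβ : 0 < β)
    (hf : ∀ x ∈ Set.Icc (0:ℝ) T, ∀ y ∈ Set.Icc (0:ℝ) T, |f x - f y| ≤ K * |x - y| ^ β)
    {x y V M : ℝ} (hx0 : 0 ≤ x) (hxy : x ≤ y) (hyT : y ≤ T)
    (hV : ChainVar ψ x y V) (hM : ∀ s ∈ Set.Icc x y, |ψ s| ≤ M)
    (t : ℕ → ℝ) (n : ℕ) (ht : ∀ i ≤ n, t i ∈ Set.Icc x y) (hord : ∀ i < n, t i ≤ t (i + 1)) :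
    |RSum f ψ t n| ≤ K * (y - x) ^ β * (M + V) := by
  set B := K * (y - x) ^ β with hB
  have hB0 : 0 ≤ B := mul_nonneg hK (Real.rpow_nonneg (by linarith) _)
  set F : ℕ → ℝ := fun i => f (t i) - f (t n) with hF
  have hFb : ∀ i, i ≤ n → |F i| ≤ B := by
    intro i hi
    have h1 := ht i hi; have h2 := ht n le_rfl
    have key := hf (t i) ⟨hx0.trans h1.1, h1.2.trans hyT⟩ (t n) ⟨hx0.trans h2.1, h2.2.trans hyT⟩
    refine key.trans ?_
    rw [hB]
    have hbase : |t i - t n| ≤ y - x := by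
      rw [abs_sub_le_iff]; constructor <;> linarith [h1.1, h1.2, h2.1, h2.2]
    exact mul_le_mul_of_nonneg_left (Real.rpow_le_rpow (abs_nonneg _) hbase hβ.le) hK
  have key : RSum f ψ t n = (∑ i ∈ Finset.range n, (ψ (t i) - ψ (t (i+1))) * F (i+1))
      + (ψ (t n) * F n - ψ (t 0) * F 0) := by
    rw [← Finset.sum_range_sub (fun i => ψ (t i) * F i) n, ← Finset.sum_add_distrib]
    exact Finset.sum_congr rfl fun i _ => by simp only [hF]; ring
  have hFn : F n = 0 := by simp [hF]
  rw [key, hFn]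
  have habs : |(∑ i ∈ Finset.range n, (ψ (t i) - ψ (t (i+1))) * F (i+1))
      + (ψ (t n) * 0 - ψ (t 0) * F 0)|
      ≤ (∑ i ∈ Finset.range n, |ψ (t i) - ψ (t (i+1))| * |F (i+1)|) + |ψ (t 0)| * |F 0| := by
    refine (abs_add_le _ _).trans ?_
    gcongr
    · refine (Finset.abs_sum_le_sum_abs _ _).trans ?_
      exact Finset.sum_le_sum fun i _ => le_of_eq (abs_mul _ _)
    · rw [mul_zero, zero_sub, abs_neg, abs_mul]
  refine habs.trans ?_
  have h1 : ∑ i ∈ Finset.range n, |ψ (t i) - ψ (t (i+1))| * |F (i+1)|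
      ≤ ∑ i ∈ Finset.range n, |ψ (t (i+1)) - ψ (t i)| * B := by
    refine Finset.sum_le_sum fun i hi => ?_
    have hi' : i < n := Finset.mem_range.mp hi
    rw [abs_sub_comm]
    exact mul_le_mul_of_nonneg_left (hFb (i+1) hi') (abs_nonneg _)
  have h2 : ∑ i ∈ Finset.range n, |ψ (t (i+1)) - ψ (t i)| * B
      = (∑ i ∈ Finset.range n, |ψ (t (i+1)) - ψ (t i)|) * B := by
    rw [Finset.sum_mul]
  have h3 : (∑ i ∈ Finset.range n, |ψ (t (i+1)) - ψ (t i)|) * B ≤ V * B :=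
    mul_le_mul_of_nonneg_right (hV n t ht hord) hB0
  have h4 : |ψ (t 0)| * |F 0| ≤ M * B :=
    mul_le_mul (hM _ (ht 0 (Nat.zero_le _))) (hFb 0 (Nat.zero_le _)) (abs_nonneg _)
      ((abs_nonneg _).trans (hM _ (ht 0 (Nat.zero_le _))))
  calc _ ≤ V * B + M * B := by linarith
    _ = B * (M + V) := by ring

/-- Existence of an arbitrarily fine uniform partition with the Abel estimate. -/
lemma blockPart {T K β : ℝ} (f ψ : ℝ → ℝ) (hK : 0 ≤ K) (hβ : 0 < β)
    (hf : ∀ x ∈ Set.Icc (0:ℝ) T, ∀ y ∈ Set.Icc (0:ℝ) T, |f x - f y| ≤ K * |x - y| ^ β)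
    {x y V M : ℝ} (hx0 : 0 ≤ x) (hxy : x < y) (hyT : y ≤ T)
    (hV : ChainVar ψ x y V) (hM : ∀ s ∈ Set.Icc x y, |ψ s| ≤ M)
    {δ : ℝ} (hδ : 0 < δ) :
    ∃ n t, IsPart t n x y δ ∧ |RSum f ψ t n| ≤ K * (y - x) ^ β * (M + V) := by
  set n := ⌈(y - x) / δ⌉₊ with hn
  have hypos : 0 < y - x := by linarith
  have hnpos : 0 < n := Nat.ceil_pos.mpr (div_pos hypos hδ)
  have hnR : (0:ℝ) < n := Nat.cast_pos.mpr hnpos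
  set st := (y - x) / n with hst
  have hstpos : 0 < st := div_pos hypos hnR
  set t : ℕ → ℝ := fun i => x + i * st with hts
  have htn : t n = y := by simp only [hts, hst]; field_simp; ring
  have hstep : ∀ i : ℕ, t (i+1) - t i = st := by
    intro i; simp only [hts]; push_cast; ring
  have hpart : IsPart t n x y δ := by
    constructor
    · exact hnpos
    · simp [hts]
    · exact htn
    · intro i _; rw [← sub_pos, hstep]; exact hstpos
    · intro i _
      rw [hstep]
      rw [hst, div_le_iff₀ hnR]
      have h1 : (y - x) / δ ≤ (n : ℝ) := by rw [hn]; exact Nat.le_ceil _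
      rw [div_le_iff₀ hδ] at h1
      linarith
  refine ⟨n, t, hpart, ?_⟩
  refine master f ψ hK hβ hf hx0 hxy.le hyT hV hM t n (fun i hi => ?_) (fun i _ => ?_)
  · constructor
    · simp only [hts]
      have : (0:ℝ) ≤ i * st := mul_nonneg (Nat.cast_nonneg _) hstpos.le
      linarith
    · rw [← htn]
      simp only [hts]
      have : (i:ℝ) * st ≤ n * st := by
        apply mul_le_mul_of_nonneg_right _ hstpos.le
        exact_mod_cast hi
      linarith
  · rw [← sub_nonneg, hstep]; exact hstpos.le



lemma two_le_pow {N : ℕ} : (2:ℝ) ≤ 2 ^ (N + 1) := by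
  calc (2:ℝ) = 2 ^ 1 := (pow_one 2).symm
    _ ≤ 2 ^ (N + 1) := by
      apply pow_le_pow_right₀ (by norm_num) (by omega)

/-- Dyadic decomposition with accumulation at the left anchor `p`. -/
lemma famL (f ψ : ℝ → ℝ) {p d δ W : ℝ} (w : ℝ → ℝ) (hd : 0 < d) (hδ : 0 < δ)
    (hw0 : ∀ r, 0 < r → 0 ≤ w r)
    (hW : ∀ N : ℕ, ∑ k ∈ Finset.range (N + 1), w (d / 2 ^ k) ≤ W)
    (Hb : ∀ x y : ℝ, p < x → x < y → y ≤ p + d → y - p ≤ 2 * (x - p) →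
      ∃ n t, IsPart t n x y δ ∧ |RSum f ψ t n| ≤ w (y - p)) :
    ∀ u : ℝ, p < u → u < p + d → ∃ n t, IsPart t n u (p + d) δ ∧ |RSum f ψ t n| ≤ W := by
  have claim : ∀ N : ℕ, ∀ u : ℝ, p < u → d / 2 ^ (N + 1) ≤ u - p → u < p + d →
      ∃ n t, IsPart t n u (p + d) δ ∧
        |RSum f ψ t n| ≤ ∑ k ∈ Finset.range (N + 1), w (d / 2 ^ k) := by
    intro N
    induction N with
    | zero =>
      intro u hu hlow hup
      obtain ⟨n, t, hp, hb⟩ := Hb u (p + d) hu hup le_rfl (by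
        have e : p + d - p = d := by ring
        rw [e]
        rw [pow_one] at hlow
        linarith)
      refine ⟨n, t, hp, ?_⟩
      have e : p + d - p = d := by ring
      rw [e] at hb
      simpa using hb
    | succ N ih =>
      intro u hu hlow hup
      by_cases hc : d / 2 ^ (N + 1) ≤ u - p
      · obtain ⟨n, t, hp, hb⟩ := ih u hu hc hup
        refine ⟨n, t, hp, hb.trans ?_⟩
        rw [Finset.sum_range_succ (fun k => w (d / 2 ^ k)) (N + 1)]
        have := hw0 (d / 2 ^ (N + 1)) (by positivity)
        linarith
      · push_neg at hc
        set u' := p + d / 2 ^ (N + 1) with hu'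
        have hdp : (0:ℝ) < d / 2 ^ (N + 1) := by positivity
        have hlow' : d / 2 ^ (N + 2) ≤ u - p := hlow
        have huu' : u < u' := by rw [hu']; linarith
        have hu'd : u' < p + d := by
          rw [hu']
          have h2 := two_le_pow (N := N)
          have : d / 2 ^ (N + 1) < d := by
            apply div_lt_self hd; linarith
          linarith
        have he : u' - p = d / 2 ^ (N + 1) := by rw [hu']; ring
        have he2 : d / 2 ^ (N + 1) = 2 * (d / 2 ^ (N + 2)) := by
          rw [pow_succ]; ring
        obtain ⟨n₁, t₁, hp₁, hb₁⟩ := Hb u u' hu huu' (by linarith) (by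
          rw [he, he2]; linarith)
        obtain ⟨n₂, t₂, hp₂, hb₂⟩ := ih u' (by linarith) (le_of_eq he.symm) hu'd
        refine ⟨n₁ + n₂, cat t₁ t₂ n₁, cat_isPart hp₁ hp₂, ?_⟩
        rw [cat_rsum f ψ (by rw [hp₁.right, hp₂.left])]
        rw [Finset.sum_range_succ (fun k => w (d / 2 ^ k)) (N + 1)]
        rw [he] at hb₁
        calc |RSum f ψ t₁ n₁ + RSum f ψ t₂ n₂| ≤ |RSum f ψ t₁ n₁| + |RSum f ψ t₂ n₂| :=
              abs_add_le _ _
          _ ≤ (∑ k ∈ Finset.range (N + 1), w (d / 2 ^ k)) + w (d / 2 ^ (N + 1)) := by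
              have := hb₁; have := hb₂; linarith
  intro u hu hup
  obtain ⟨N, hN⟩ : ∃ N : ℕ, d / 2 ^ (N + 1) ≤ u - p := by
    obtain ⟨N, hN⟩ := pow_unbounded_of_one_lt (d / (u - p)) (by norm_num : (1:ℝ) < 2)
    refine ⟨N, ?_⟩
    have hup0 : 0 < u - p := by linarith
    rw [div_lt_iff₀ hup0] at hN
    rw [div_le_iff₀ (by positivity)]
    have hp1 : (2:ℝ) ^ N ≤ 2 ^ (N + 1) := by
      apply pow_le_pow_right₀ (by norm_num) (by omega)
    nlinarith
  obtain ⟨n, t, hp, hb⟩ := claim N u hu hN hup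
  exact ⟨n, t, hp, hb.trans (hW N)⟩

/-- Dyadic decomposition with accumulation at the right anchor `p`. -/
lemma famR (f ψ : ℝ → ℝ) {p d δ W : ℝ} (w : ℝ → ℝ) (hd : 0 < d) (hδ : 0 < δ)
    (hw0 : ∀ r, 0 < r → 0 ≤ w r)
    (hW : ∀ N : ℕ, ∑ k ∈ Finset.range (N + 1), w (d / 2 ^ k) ≤ W)
    (Hb : ∀ x y : ℝ, p - d ≤ x → x < y → y < p → p - x ≤ 2 * (p - y) →
      ∃ n t, IsPart t n x y δ ∧ |RSum f ψ t n| ≤ w (p - x)) :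
    ∀ v : ℝ, p - d < v → v < p → ∃ n t, IsPart t n (p - d) v δ ∧ |RSum f ψ t n| ≤ W := by
  have claim : ∀ N : ℕ, ∀ v : ℝ, d / 2 ^ (N + 1) ≤ p - v → p - d < v → v < p →
      ∃ n t, IsPart t n (p - d) v δ ∧
        |RSum f ψ t n| ≤ ∑ k ∈ Finset.range (N + 1), w (d / 2 ^ k) := by
    intro N
    induction N with
    | zero =>
      intro v hlow hlo hhi
      obtain ⟨n, t, hp, hb⟩ := Hb (p - d) v (le_refl _) (by linarith) hhi (by
        have e : p - (p - d) = d := by ring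
        rw [e]
        rw [pow_one] at hlow
        linarith)
      refine ⟨n, t, hp, ?_⟩
      have e : p - (p - d) = d := by ring
      rw [e] at hb
      simpa using hb
    | succ N ih =>
      intro v hlow hlo hhi
      by_cases hc : d / 2 ^ (N + 1) ≤ p - v
      · obtain ⟨n, t, hp, hb⟩ := ih v hc hlo hhi
        refine ⟨n, t, hp, hb.trans ?_⟩
        rw [Finset.sum_range_succ (fun k => w (d / 2 ^ k)) (N + 1)]
        have := hw0 (d / 2 ^ (N + 1)) (by positivity)
        linarith
      · push_neg at hc
        set v' := p - d / 2 ^ (N + 1) with hv'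
        have hdp : (0:ℝ) < d / 2 ^ (N + 1) := by positivity
        have hlow' : d / 2 ^ (N + 2) ≤ p - v := hlow
        have hvv' : v' < v := by rw [hv']; linarith
        have hv'd : p - d < v' := by
          rw [hv']
          have h2 := two_le_pow (N := N)
          have : d / 2 ^ (N + 1) < d := by
            apply div_lt_self hd; linarith
          linarith
        have he : p - v' = d / 2 ^ (N + 1) := by rw [hv']; ring
        have he2 : d / 2 ^ (N + 1) = 2 * (d / 2 ^ (N + 2)) := by
          rw [pow_succ]; ring
        obtain ⟨n₁, t₁, hp₁, hb₁⟩ := ih v' (le_of_eq he.symm) hv'd (by rw [hv']; linarith)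
        obtain ⟨n₂, t₂, hp₂, hb₂⟩ := Hb v' v (by linarith) hvv' hhi (by
          rw [he, he2]; linarith)
        refine ⟨n₁ + n₂, cat t₁ t₂ n₁, cat_isPart hp₁ hp₂, ?_⟩
        rw [cat_rsum f ψ (by rw [hp₁.right, hp₂.left])]
        rw [Finset.sum_range_succ (fun k => w (d / 2 ^ k)) (N + 1)]
        rw [he] at hb₂
        calc |RSum f ψ t₁ n₁ + RSum f ψ t₂ n₂| ≤ |RSum f ψ t₁ n₁| + |RSum f ψ t₂ n₂| :=
              abs_add_le _ _
          _ ≤ (∑ k ∈ Finset.range (N + 1), w (d / 2 ^ k)) + w (d / 2 ^ (N + 1)) := by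
              have := hb₁; have := hb₂; linarith
  intro v hlo hhi
  obtain ⟨N, hN⟩ : ∃ N : ℕ, d / 2 ^ (N + 1) ≤ p - v := by
    obtain ⟨N, hN⟩ := pow_unbounded_of_one_lt (d / (p - v)) (by norm_num : (1:ℝ) < 2)
    refine ⟨N, ?_⟩
    have hup0 : 0 < p - v := by linarith
    rw [div_lt_iff₀ hup0] at hN
    rw [div_le_iff₀ (by positivity)]
    have hp1 : (2:ℝ) ^ N ≤ 2 ^ (N + 1) := by
      apply pow_le_pow_right₀ (by norm_num) (by omega)
    nlinarith
  obtain ⟨n, t, hp, hb⟩ := claim N v hN hlo hhi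
  exact ⟨n, t, hp, hb.trans (hW N)⟩



noncomputable def cg (γ : ℝ) : ℝ := (1 - ((2:ℝ) ^ γ)⁻¹)⁻¹

lemma one_lt_two_rpow {γ : ℝ} (hγ : 0 < γ) : (1:ℝ) < 2 ^ γ := by
  rw [Real.one_lt_rpow_iff_of_pos (by norm_num)]
  exact Or.inl ⟨by norm_num, hγ⟩

lemma cg_nonneg {γ : ℝ} (hγ : 0 < γ) : 0 ≤ cg γ := by
  have h1 := one_lt_two_rpow hγ
  have h2 : ((2:ℝ) ^ γ)⁻¹ < 1 := by rw [inv_lt_one_iff₀]; right; exact h1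
  exact inv_nonneg.mpr (by linarith)

lemma geom_le {q : ℝ} (h0 : 0 ≤ q) (h1 : q < 1) (n : ℕ) :
    ∑ i ∈ Finset.range n, q ^ i ≤ (1 - q)⁻¹ := by
  have h2 : 0 < 1 - q := by linarith
  rw [geom_sum_eq h1.ne n]
  have e : (q ^ n - 1) / (q - 1) = (1 - q ^ n) / (1 - q) := by
    rw [← neg_div_neg_eq]; ring_nf
  rw [e, inv_eq_one_div, div_le_div_iff_of_pos_right h2]
  nlinarith [pow_nonneg h0 n]

lemma sum_dyadic_rpow {γ d : ℝ} (hγ : 0 < γ) (hd : 0 < d) (N : ℕ) :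
    ∑ k ∈ Finset.range (N + 1), (d / 2 ^ k) ^ γ ≤ d ^ γ * cg γ := by
  have h1 := one_lt_two_rpow hγ
  have hq0 : (0:ℝ) ≤ ((2:ℝ) ^ γ)⁻¹ := by positivity
  have hq1 : ((2:ℝ) ^ γ)⁻¹ < 1 := by rw [inv_lt_one_iff₀]; right; exact h1
  have key : ∀ k : ℕ, (d / 2 ^ k) ^ γ = d ^ γ * (((2:ℝ) ^ γ)⁻¹) ^ k := by
    intro k
    rw [Real.div_rpow hd.le (by positivity)]
    have e : ((2:ℝ) ^ (k:ℕ)) ^ γ = ((2:ℝ) ^ γ) ^ (k:ℕ) := by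
      rw [← Real.rpow_natCast 2 k, ← Real.rpow_mul (by norm_num), mul_comm,
        Real.rpow_mul (by norm_num), Real.rpow_natCast]
    rw [e, div_eq_mul_inv, inv_pow]
  rw [Finset.sum_congr rfl fun k _ => key k, ← Finset.mul_sum]
  unfold cg
  exact mul_le_mul_of_nonneg_left (geom_le hq0 hq1 _) (Real.rpow_nonneg hd.le _)

lemma hw_pow {A γ d : ℝ} (hA : 0 ≤ A) (hγ : 0 < γ) (hd : 0 < d) (N : ℕ) :
    ∑ k ∈ Finset.range (N + 1), A * (d / 2 ^ k) ^ γ ≤ A * (d ^ γ * cg γ) := by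
  rw [← Finset.mul_sum]
  exact mul_le_mul_of_nonneg_left (sum_dyadic_rpow hγ hd N) hA

/-- Mean value bound: `x^α - (x+h)^α ≤ (-α) h x^(α-1)`. -/
lemma mvt_rpow {x h α : ℝ} (hx : 0 < x) (hh : 0 < h) (hα : α < 0) :
    x ^ α - (x + h) ^ α ≤ (-α) * h * x ^ (α - 1) := by
  have hcont : ContinuousOn (fun z : ℝ => z ^ α) (Set.Icc x (x + h)) := by
    intro z hz
    exact (Real.continuousAt_rpow_const z α (Or.inl (hx.trans_le hz.1).ne')).continuousWithinAt
  have hderiv : ∀ z ∈ Set.Ioo x (x + h),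
      HasDerivAt (fun z : ℝ => z ^ α) (α * z ^ (α - 1)) z := fun z hz =>
    Real.hasDerivAt_rpow_const (Or.inl (hx.trans hz.1).ne')
  obtain ⟨c, hc, heq⟩ := exists_hasDerivAt_eq_slope (fun z : ℝ => z ^ α)
    (fun z => α * z ^ (α - 1)) (by linarith) hcont hderiv
  have hcx : c ^ (α - 1) ≤ x ^ (α - 1) :=
    Real.rpow_le_rpow_of_nonpos hx hc.1.le (by linarith)
  have he : (x + h) ^ α - x ^ α = α * c ^ (α - 1) * h := by
    have e2 : x + h - x = h := by ring
    rw [e2] at heq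
    field_simp at heq
    linarith [heq]
  have h2 : x ^ α - (x + h) ^ α = (-α) * h * c ^ (α - 1) := by linarith [he]
  rw [h2]
  have hcoef : 0 ≤ (-α) * h := by nlinarith
  exact mul_le_mul_of_nonneg_left hcx hcoef

/-- Antitonicity of `z ↦ z^α - (z+h)^α` on `(0, ∞)` for `α < 0`, `h ≥ 0`. -/
lemma incr_anti {h α : ℝ} (hh : 0 ≤ h) (hα : α < 0) {x y : ℝ}
    (hx : 0 < x) (hxy : x ≤ y) :
    y ^ α - (y + h) ^ α ≤ x ^ α - (x + h) ^ α := by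
  have hder : ∀ z : ℝ, 0 < z →
      HasDerivAt (fun z : ℝ => z ^ α - (z + h) ^ α)
        (α * z ^ (α - 1) - α * (z + h) ^ (α - 1)) z := by
    intro z hz
    have h1 : HasDerivAt (fun z : ℝ => z ^ α) (α * z ^ (α - 1)) z :=
      Real.hasDerivAt_rpow_const (Or.inl hz.ne')
    have h2 : HasDerivAt (fun z : ℝ => (z + h) ^ α) (α * (z + h) ^ (α - 1)) z := by
      have h3 : HasDerivAt (fun z : ℝ => z + h) 1 z := (hasDerivAt_id z).add_const h
      have h4 : HasDerivAt (fun w : ℝ => w ^ α) (α * (z + h) ^ (α - 1)) (z + h) :=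
        Real.hasDerivAt_rpow_const (Or.inl (by positivity : (0:ℝ) < z + h).ne')
      have := h4.comp z h3
      rw [mul_one] at this
      exact this
    exact h1.sub h2
  have key : AntitoneOn (fun z : ℝ => z ^ α - (z + h) ^ α) (Set.Ioi 0) := by
    apply antitoneOn_of_deriv_nonpos (convex_Ioi 0)
    · intro z hz
      exact ((hder z hz).continuousAt).continuousWithinAt
    · rw [interior_Ioi]
      intro z hz
      exact ((hder z hz).differentiableAt).differentiableWithinAt
    · rw [interior_Ioi]
      intro z hz
      rw [(hder z hz).deriv]
      have hbr : (z + h) ^ (α - 1) ≤ z ^ (α - 1) :=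
        Real.rpow_le_rpow_of_nonpos hz (by linarith) (by linarith)
      nlinarith
  exact key hx (by linarith : (0:ℝ) < y) hxy

/-- Interpolated bound on the kernel difference. -/
lemma Dbound {a b s θ α : ℝ} (hα : α < 0) (hθ0 : 0 < θ) (hθ1 : θ ≤ 1)
    (hs : 0 < s) (hsa : s < a) (hab : a < b) :
    |(b - s) ^ α - (a - s) ^ α| ≤ ((-α) * (b - a)) ^ θ * (a - s) ^ (α - θ) := by
  have hx : 0 < a - s := sub_pos.mpr hsa
  have hh : 0 < b - a := sub_pos.mpr hab
  have hbs : b - s = (a - s) + (b - a) := by ring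
  have hmono : ((a - s) + (b - a)) ^ α ≤ (a - s) ^ α :=
    Real.rpow_le_rpow_of_nonpos hx (by linarith) hα.le
  have hz0 : 0 ≤ (a - s) ^ α - ((a - s) + (b - a)) ^ α := by linarith
  have habs : |(b - s) ^ α - (a - s) ^ α| = (a - s) ^ α - ((a - s) + (b - a)) ^ α := by
    rw [hbs, abs_sub_comm]
    exact abs_of_nonneg hz0
  rw [habs]
  have hzP : (a - s) ^ α - ((a - s) + (b - a)) ^ α ≤ (a - s) ^ α := by
    have : 0 ≤ ((a - s) + (b - a)) ^ α := Real.rpow_nonneg (by linarith) _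
    linarith
  have hzQ : (a - s) ^ α - ((a - s) + (b - a)) ^ α ≤ (-α) * (b - a) * (a - s) ^ (α - 1) :=
    mvt_rpow hx hh hα
  have hP0 : (0:ℝ) ≤ (a - s) ^ α := Real.rpow_nonneg hx.le _
  have hQ0 : (0:ℝ) ≤ (-α) * (b - a) * (a - s) ^ (α - 1) := by
    have h1 : (0:ℝ) ≤ (a - s) ^ (α - 1) := Real.rpow_nonneg hx.le _
    have h2 : (0:ℝ) ≤ -α := by linarith
    positivity
  have hinterp : (a - s) ^ α - ((a - s) + (b - a)) ^ α ≤
      ((a - s) ^ α) ^ (1 - θ) * ((-α) * (b - a) * (a - s) ^ (α - 1)) ^ θ := by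
    rcases eq_or_lt_of_le hz0 with hz | hz
    · rw [← hz]
      positivity
    · have e : (a - s) ^ α - ((a - s) + (b - a)) ^ α
          = ((a - s) ^ α - ((a - s) + (b - a)) ^ α) ^ (1 - θ)
            * ((a - s) ^ α - ((a - s) + (b - a)) ^ α) ^ θ := by
        rw [← Real.rpow_add hz, sub_add_cancel, Real.rpow_one]
      rw [e]
      apply mul_le_mul
      · exact Real.rpow_le_rpow hz0 hzP (by linarith)
      · exact Real.rpow_le_rpow hz0 hzQ hθ0.le
      · exact Real.rpow_nonneg hz0 _
      · exact Real.rpow_nonneg hP0 _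
  refine hinterp.trans (le_of_eq ?_)
  have e1 : ((-α) * (b - a) * (a - s) ^ (α - 1)) ^ θ
      = ((-α) * (b - a)) ^ θ * ((a - s) ^ (α - 1)) ^ θ :=
    Real.mul_rpow (by nlinarith) (Real.rpow_nonneg hx.le _)
  have e2 : ((a - s) ^ α) ^ (1 - θ) = (a - s) ^ (α * (1 - θ)) :=
    (Real.rpow_mul hx.le α (1 - θ)).symm
  have e3 : ((a - s) ^ (α - 1)) ^ θ = (a - s) ^ ((α - 1) * θ) :=
    (Real.rpow_mul hx.le (α - 1) θ).symm
  rw [e1, e2, e3]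
  have e4 : (a - s) ^ (α * (1 - θ)) * (a - s) ^ ((α - 1) * θ) = (a - s) ^ (α - θ) := by
    rw [← Real.rpow_add hx]
    congr 1
    ring
  calc (a - s) ^ (α * (1 - θ)) * (((-α) * (b - a)) ^ θ * (a - s) ^ ((α - 1) * θ))
      = ((-α) * (b - a)) ^ θ * ((a - s) ^ (α * (1 - θ)) * (a - s) ^ ((α - 1) * θ)) := by ring
    _ = ((-α) * (b - a)) ^ θ * (a - s) ^ (α - θ) := by rw [e4]




/-! ### Product blocks -/

lemma rpow_base_le {x y e : ℝ} (hx : 0 < x) (hxy : x ≤ y) (he : e ≤ 0) : y ^ e ≤ x ^ e :=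
  Real.rpow_le_rpow_of_nonpos hx hxy he

lemma block_mul {T K β : ℝ} (f ψ₁ ψ₂ : ℝ → ℝ) (hK : 0 ≤ K) (hβ : 0 < β)
    (hf : ∀ x ∈ Set.Icc (0:ℝ) T, ∀ y ∈ Set.Icc (0:ℝ) T, |f x - f y| ≤ K * |x - y| ^ β)
    {x y M₁ M₂ : ℝ} (hx0 : 0 ≤ x) (hxy : x < y) (hyT : y ≤ T)
    (hm₁ : MonotoneOn ψ₁ (Set.Icc x y) ∨ AntitoneOn ψ₁ (Set.Icc x y))
    (hm₂ : MonotoneOn ψ₂ (Set.Icc x y) ∨ AntitoneOn ψ₂ (Set.Icc x y))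
    (hM₁ : ∀ s ∈ Set.Icc x y, |ψ₁ s| ≤ M₁) (hM₂ : ∀ s ∈ Set.Icc x y, |ψ₂ s| ≤ M₂)
    {δ : ℝ} (hδ : 0 < δ) :
    ∃ n t, IsPart t n x y δ ∧
      |RSum f (fun s => ψ₁ s * ψ₂ s) t n| ≤ 5 * K * (y - x) ^ β * (M₁ * M₂) := by
  have hM₁0 : 0 ≤ M₁ := (abs_nonneg _).trans (hM₁ x ⟨le_rfl, hxy.le⟩)
  have hM₂0 : 0 ≤ M₂ := (abs_nonneg _).trans (hM₂ x ⟨le_rfl, hxy.le⟩)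
  have hV : ChainVar (fun s => ψ₁ s * ψ₂ s) x y (M₁ * (2 * M₂) + M₂ * (2 * M₁)) :=
    chainVar_mul hxy.le (chainVar_two hm₁ hM₁) (chainVar_two hm₂ hM₂) hM₁ hM₂
  have hM : ∀ s ∈ Set.Icc x y, |ψ₁ s * ψ₂ s| ≤ M₁ * M₂ := by
    intro s hs
    rw [abs_mul]
    exact mul_le_mul (hM₁ s hs) (hM₂ s hs) (abs_nonneg _) hM₁0
  obtain ⟨n, t, hp, hb⟩ := blockPart f (fun s => ψ₁ s * ψ₂ s) hK hβ hf hx0 hxy hyT hV hM hδ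
  refine ⟨n, t, hp, hb.trans (le_of_eq ?_)⟩
  ring

lemma anti_rpow {e x y : ℝ} (hx : 0 < x) (he : e ≤ 0) :
    AntitoneOn (fun s : ℝ => s ^ e) (Set.Icc x y) := fun s hs _ _ hss =>
  rpow_base_le (hx.trans_le hs.1) hss he

lemma mono_brpow {e b x y : ℝ} (hyb : y < b) (he : e ≤ 0) :
    MonotoneOn (fun s : ℝ => (b - s) ^ e) (Set.Icc x y) := fun s _ s' hs' hss =>
  rpow_base_le (by linarith [hs'.2] : 0 < b - s') (by linarith) he

lemma anti_D {e a b x y : ℝ} (he : e < 0) (hx : 0 < x) (hya : y < a) (hab : a ≤ b) :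
    AntitoneOn (fun s : ℝ => (b - s) ^ e - (a - s) ^ e) (Set.Icc x y) := by
  intro s hs s' hs' hss
  have h1 : 0 < a - s' := by linarith [hs'.2]
  have h2 : a - s' ≤ a - s := by linarith
  have key := incr_anti (by linarith : (0:ℝ) ≤ b - a) he h1 h2
  have e1 : a - s + (b - a) = b - s := by ring
  have e2 : a - s' + (b - a) = b - s' := by ring
  rw [e1, e2] at key
  simp only
  linarith

lemma abs_rpow_pos {s e : ℝ} (hs : 0 < s) : |s ^ e| = s ^ e :=
  abs_of_pos (Real.rpow_pos_of_pos hs e)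

/-! ### Region estimates -/

noncomputable def C1 (α β : ℝ) : ℝ := 5 * (2:ℝ) ^ (-α) * (-α) ^ (2*α+β) * cg (α+β)

lemma regE1L (f : ℝ → ℝ) {T β α K a b c δ : ℝ}
    (hα2 : α < 0) (hβ : 0 < β) (hθ0 : 0 < 2*α+β) (hθ1 : 2*α+β ≤ 1)
    (hK : 0 ≤ K)
    (hf : ∀ x ∈ Set.Icc (0:ℝ) T, ∀ y ∈ Set.Icc (0:ℝ) T, |f x - f y| ≤ K * |x - y| ^ β)
    (ha : 0 < a) (hab : a < b) (hbT : b ≤ T)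
    (hc : 0 < c) (hca : c < a / 2) (hδ : 0 < δ) :
    ∃ n t, IsPart t n c (a / 2) δ ∧
      |RSum f (fun s => s ^ α * ((b - s) ^ α - (a - s) ^ α)) t n|
        ≤ C1 α β * K * (b - a) ^ (2*α+β) := by
  have hh : 0 < b - a := sub_pos.mpr hab
  have hna : (0:ℝ) ≤ -α := by linarith
  have hnah : (0:ℝ) ≤ (-α) * (b - a) := mul_nonneg hna hh.le
  have hαβ : 0 < α + β := by linarith
  have hd : 0 < a / 2 := by linarith
  set A₁ := 5*K*(2:ℝ)^(-α)*((-α)*(b-a))^(2*α+β)*(a/2)^(α-(2*α+β)) with hA₁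
  have hA₁0 : 0 ≤ A₁ := by
    rw [hA₁]
    have h1 : (0:ℝ) ≤ ((-α)*(b-a)) ^ (2*α+β) := Real.rpow_nonneg hnah _
    have h2 : (0:ℝ) ≤ (2:ℝ) ^ (-α) := Real.rpow_nonneg (by norm_num) _
    have h3 : (0:ℝ) ≤ (a/2) ^ (α-(2*α+β)) := Real.rpow_nonneg hd.le _
    positivity
  have hWb : ∀ N : ℕ, ∑ k ∈ Finset.range (N + 1), A₁ * ((a/2) / 2 ^ k) ^ (α+β)
      ≤ C1 α β * K * (b - a) ^ (2*α+β) := by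
    intro N
    refine (hw_pow hA₁0 hαβ hd N).trans (le_of_eq ?_)
    have e1 : (a/2)^(α-(2*α+β)) * (a/2)^(α+β) = 1 := by
      rw [← Real.rpow_add hd]
      have e : α - (2*α+β) + (α+β) = 0 := by ring
      rw [e, Real.rpow_zero]
    rw [hA₁, C1, Real.mul_rpow hna hh.le]
    have e2 : 5*K*(2:ℝ)^(-α)*((-α)^(2*α+β)*(b-a)^(2*α+β))*(a/2)^(α-(2*α+β))
          * ((a/2)^(α+β) * cg (α+β))
        = (5*(2:ℝ)^(-α)*(-α)^(2*α+β)*cg (α+β)*K*(b-a)^(2*α+β))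
          * ((a/2)^(α-(2*α+β)) * (a/2)^(α+β)) := by ring
    rw [e2, e1, mul_one]
  have main := famL (p := 0) (d := a/2) f
      (fun s => s ^ α * ((b - s) ^ α - (a - s) ^ α))
      (fun r => A₁ * r ^ (α+β)) hd hδ
      (fun r hr => mul_nonneg hA₁0 (Real.rpow_nonneg hr.le _))
      hWb ?Hb c hc (by linarith : c < 0 + a/2)
  case Hb =>
    intro x y hx hxy hyd hhalf
    rw [sub_zero] at hhalf
    have hx0 : 0 < x := by linarith
    have h0y : 0 < y := hx0.trans hxy
    have hy2 : y ≤ a/2 := by linarith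
    have hylt : y < a := by linarith
    obtain ⟨n, t, hp, hb⟩ := block_mul f (fun s => s^α) (fun s => (b-s)^α - (a-s)^α) hK hβ hf
      hx0.le hxy (by linarith)
      (Or.inr (anti_rpow hx0 hα2.le))
      (Or.inr (anti_D hα2 hx0 hylt hab.le))
      (M₁ := x ^ α) (M₂ := ((-α)*(b-a))^(2*α+β) * (a-y)^(α-(2*α+β)))
      (fun s hs => by
        rw [abs_rpow_pos (hx0.trans_le hs.1)]
        exact rpow_base_le hx0 hs.1 hα2.le)
      (fun s hs => by
        refine (Dbound hα2 hθ0 hθ1 (hx0.trans_le hs.1) (by linarith [hs.2] : s < a) hab).trans ?_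
        refine mul_le_mul_of_nonneg_left ?_ (Real.rpow_nonneg hnah _)
        exact rpow_base_le (by linarith : (0:ℝ) < a - y) (by linarith [hs.2]) (by linarith))
      hδ
    refine ⟨n, t, hp, hb.trans ?_⟩
    beta_reduce
    rw [sub_zero]
    have g1 : (y - x)^β ≤ y^β := Real.rpow_le_rpow (by linarith) (by linarith) hβ.le
    have g2 : x^α ≤ (y/2)^α := rpow_base_le (by linarith : (0:ℝ) < y/2) (by linarith) hα2.le
    have g3 : (a - y)^(α-(2*α+β)) ≤ (a/2)^(α-(2*α+β)) :=
      rpow_base_le hd (by linarith) (by linarith)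
    have hx0' : (0:ℝ) ≤ x ^ α := Real.rpow_nonneg hx0.le _
    have hc0 : (0:ℝ) ≤ ((-α)*(b-a))^(2*α+β) := Real.rpow_nonneg hnah _
    have hay0 : (0:ℝ) ≤ (a-y)^(α-(2*α+β)) := Real.rpow_nonneg (by linarith) _
    have hyx0 : (0:ℝ) ≤ (y - x)^β := Real.rpow_nonneg (by linarith) _
    have step : 5*K*(y-x)^β*(x^α*(((-α)*(b-a))^(2*α+β)*(a-y)^(α-(2*α+β))))
        ≤ 5*K*y^β*((y/2)^α*(((-α)*(b-a))^(2*α+β)*(a/2)^(α-(2*α+β)))) := by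
      have h5K : (0:ℝ) ≤ 5*K := by linarith
      refine mul_le_mul (mul_le_mul_of_nonneg_left g1 h5K) ?_ ?_ ?_
      · refine mul_le_mul g2 (mul_le_mul_of_nonneg_left g3 hc0) ?_ ?_
        · exact mul_nonneg hc0 hay0
        · exact Real.rpow_nonneg (by linarith : (0:ℝ) ≤ y/2) _
      · exact mul_nonneg hx0' (mul_nonneg hc0 hay0)
      · exact mul_nonneg h5K (Real.rpow_nonneg h0y.le _)
    refine step.trans (le_of_eq ?_)
    rw [hA₁]
    have e1 : (y/2)^α = y^α * ((2:ℝ)^α)⁻¹ := by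
      rw [Real.div_rpow h0y.le (by norm_num), div_eq_mul_inv]
    have e2 : (2:ℝ)^(-α) = ((2:ℝ)^α)⁻¹ := Real.rpow_neg (by norm_num) α
    have e3 : y^(α+β) = y^α * y^β := Real.rpow_add h0y α β
    rw [e1, e2, e3]
    ring
  obtain ⟨n, t, hp, hb⟩ := main
  rw [zero_add] at hp
  exact ⟨n, t, hp, hb⟩

noncomputable def C2 (α β : ℝ) : ℝ := 5 * (2:ℝ) ^ (α+β) * (-α) ^ (2*α+β) * cg (-α)

lemma regE1R (f : ℝ → ℝ) {T β α K a b c δ : ℝ}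
    (hα2 : α < 0) (hβ : 0 < β) (hθ0 : 0 < 2*α+β) (hθ1 : 2*α+β ≤ 1)
    (hK : 0 ≤ K)
    (hf : ∀ x ∈ Set.Icc (0:ℝ) T, ∀ y ∈ Set.Icc (0:ℝ) T, |f x - f y| ≤ K * |x - y| ^ β)
    (ha : 0 < a) (hab : a < b) (hbT : b ≤ T)
    (hc : 0 < c) (hca : c < a / 2) (hδ : 0 < δ) :
    ∃ n t, IsPart t n (a / 2) (a - c) δ ∧
      |RSum f (fun s => s ^ α * ((b - s) ^ α - (a - s) ^ α)) t n|
        ≤ C2 α β * K * (b - a) ^ (2*α+β) := by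
  have hh : 0 < b - a := sub_pos.mpr hab
  have hna : (0:ℝ) ≤ -α := by linarith
  have hnah : (0:ℝ) ≤ (-α) * (b - a) := mul_nonneg hna hh.le
  have hnα : 0 < -α := by linarith
  have hd : 0 < a / 2 := by linarith
  set A₂ := 5*K*(a/2)^α*((-α)*(b-a))^(2*α+β)*(2:ℝ)^(α+β) with hA₂
  have hA₂0 : 0 ≤ A₂ := by
    rw [hA₂]
    have h1 : (0:ℝ) ≤ ((-α)*(b-a)) ^ (2*α+β) := Real.rpow_nonneg hnah _
    have h2 : (0:ℝ) ≤ (2:ℝ) ^ (α+β) := Real.rpow_nonneg (by norm_num) _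
    have h3 : (0:ℝ) ≤ (a/2) ^ α := Real.rpow_nonneg hd.le _
    positivity
  have hWb : ∀ N : ℕ, ∑ k ∈ Finset.range (N + 1), A₂ * ((a/2) / 2 ^ k) ^ (-α)
      ≤ C2 α β * K * (b - a) ^ (2*α+β) := by
    intro N
    refine (hw_pow hA₂0 hnα hd N).trans (le_of_eq ?_)
    have e1 : (a/2)^α * (a/2)^(-α) = 1 := by
      rw [← Real.rpow_add hd]
      have e : α + -α = 0 := by ring
      rw [e, Real.rpow_zero]
    rw [hA₂, C2, Real.mul_rpow hna hh.le]
    have e2 : 5*K*(a/2)^α*((-α)^(2*α+β)*(b-a)^(2*α+β))*(2:ℝ)^(α+β)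
          * ((a/2)^(-α) * cg (-α))
        = (5*(2:ℝ)^(α+β)*(-α)^(2*α+β)*cg (-α)*K*(b-a)^(2*α+β))
          * ((a/2)^α * (a/2)^(-α)) := by ring
    rw [e2, e1, mul_one]
  have main := famR (p := a) (d := a/2) f
      (fun s => s ^ α * ((b - s) ^ α - (a - s) ^ α))
      (fun r => A₂ * r ^ (-α)) hd hδ
      (fun r hr => mul_nonneg hA₂0 (Real.rpow_nonneg hr.le _))
      hWb ?Hb (a - c) (by linarith) (by linarith)
  case Hb =>
    intro x y hx hxy hya hhalf
    have hx2 : a / 2 ≤ x := by linarith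
    have hx0 : 0 < x := lt_of_lt_of_le hd hx2
    have hax : 0 < a - x := by linarith
    have hay : 0 < a - y := by linarith
    obtain ⟨n, t, hp, hb⟩ := block_mul f (fun s => s^α) (fun s => (b-s)^α - (a-s)^α) hK hβ hf
      hx0.le hxy (by linarith)
      (Or.inr (anti_rpow hx0 hα2.le))
      (Or.inr (anti_D hα2 hx0 hya hab.le))
      (M₁ := (a/2) ^ α) (M₂ := ((-α)*(b-a))^(2*α+β) * (a-y)^(α-(2*α+β)))
      (fun s hs => by
        rw [abs_rpow_pos (hx0.trans_le hs.1)]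
        exact rpow_base_le hd (by linarith [hs.1]) hα2.le)
      (fun s hs => by
        refine (Dbound hα2 hθ0 hθ1 (hx0.trans_le hs.1) (by linarith [hs.2] : s < a) hab).trans ?_
        refine mul_le_mul_of_nonneg_left ?_ (Real.rpow_nonneg hnah _)
        exact rpow_base_le hay (by linarith [hs.2]) (by linarith))
      hδ
    refine ⟨n, t, hp, hb.trans ?_⟩
    beta_reduce
    have g1 : (y - x)^β ≤ (a - x)^β := Real.rpow_le_rpow (by linarith) (by linarith) hβ.le
    have g3 : (a - y)^(α-(2*α+β)) ≤ ((a-x)/2)^(α-(2*α+β)) :=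
      rpow_base_le (by linarith : (0:ℝ) < (a-x)/2) (by linarith) (by linarith)
    have hc0 : (0:ℝ) ≤ ((-α)*(b-a))^(2*α+β) := Real.rpow_nonneg hnah _
    have had0 : (0:ℝ) ≤ (a/2) ^ α := Real.rpow_nonneg hd.le _
    have hay0 : (0:ℝ) ≤ (a-y)^(α-(2*α+β)) := Real.rpow_nonneg hay.le _
    have h5K : (0:ℝ) ≤ 5*K := by linarith
    have step : 5*K*(y-x)^β*((a/2)^α*(((-α)*(b-a))^(2*α+β)*(a-y)^(α-(2*α+β))))
        ≤ 5*K*(a-x)^β*((a/2)^α*(((-α)*(b-a))^(2*α+β)*((a-x)/2)^(α-(2*α+β)))) := by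
      refine mul_le_mul (mul_le_mul_of_nonneg_left g1 h5K) ?_ ?_ ?_
      · exact mul_le_mul_of_nonneg_left (mul_le_mul_of_nonneg_left g3 hc0) had0
      · exact mul_nonneg had0 (mul_nonneg hc0 hay0)
      · exact mul_nonneg h5K (Real.rpow_nonneg (by linarith) _)
    refine step.trans (le_of_eq ?_)
    rw [hA₂]
    have e1 : ((a-x)/2)^(α-(2*α+β)) = (a-x)^(α-(2*α+β)) * ((2:ℝ)^(α-(2*α+β)))⁻¹ := by
      rw [Real.div_rpow hax.le (by norm_num), div_eq_mul_inv]
    have e2 : ((2:ℝ)^(α-(2*α+β)))⁻¹ = (2:ℝ)^(α+β) := by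
      rw [← Real.rpow_neg (by norm_num : (0:ℝ) ≤ 2)]
      congr 1
      ring
    have e3 : (a-x)^(-α) = (a-x)^β * (a-x)^(α-(2*α+β)) := by
      rw [show -α = β + (α-(2*α+β)) by ring, Real.rpow_add hax]
    rw [e1, e2, e3]
    ring
  obtain ⟨n, t, hp, hb⟩ := main
  rw [show a - a/2 = a/2 by ring] at hp
  exact ⟨n, t, hp, hb⟩

/-- Generic right-anchored estimate for the kernel `s^α (b-s)^α` on `[b-d, b-c]`. -/
lemma regR (f : ℝ → ℝ) {T β α K b l d c δ : ℝ}
    (hα2 : α < 0) (hβ : 0 < β) (hαβ : 0 < α + β) (hK : 0 ≤ K)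
    (hf : ∀ x ∈ Set.Icc (0:ℝ) T, ∀ y ∈ Set.Icc (0:ℝ) T, |f x - f y| ≤ K * |x - y| ^ β)
    (hb0 : 0 < b) (hbT : b ≤ T) (hl : 0 < l) (hld : l ≤ b - d) (hd : 0 < d)
    (hc : 0 < c) (hcd : c < d) (hδ : 0 < δ) :
    ∃ n t, IsPart t n (b - d) (b - c) δ ∧
      |RSum f (fun s => s ^ α * (b - s) ^ α) t n|
        ≤ 5*K*(2:ℝ)^(-α)*l^α * (d^(α+β) * cg (α+β)) := by
  have h2α : (0:ℝ) ≤ (2:ℝ)^(-α) := Real.rpow_nonneg (by norm_num) _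
  have hlα : (0:ℝ) ≤ l^α := Real.rpow_nonneg hl.le _
  set A := 5*K*(2:ℝ)^(-α)*l^α with hA
  have hA0 : 0 ≤ A := by rw [hA]; positivity
  have hWb : ∀ N : ℕ, ∑ k ∈ Finset.range (N + 1), A * (d / 2 ^ k) ^ (α+β)
      ≤ A * (d^(α+β) * cg (α+β)) := fun N => hw_pow hA0 hαβ hd N
  have main := famR (p := b) (d := d) f (fun s => s ^ α * (b - s) ^ α)
      (fun r => A * r ^ (α+β)) hd hδ
      (fun r hr => mul_nonneg hA0 (Real.rpow_nonneg hr.le _))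
      hWb ?Hb (b - c) (by linarith) (by linarith)
  case Hb =>
    intro x y hx hxy hyb hhalf
    have hx0 : 0 < x := by linarith
    have hby : 0 < b - y := by linarith
    have hbx : 0 < b - x := by linarith
    obtain ⟨n, t, hp, hb⟩ := block_mul f (fun s => s^α) (fun s => (b-s)^α) hK hβ hf
      hx0.le hxy (by linarith)
      (Or.inr (anti_rpow hx0 hα2.le))
      (Or.inl (mono_brpow hyb hα2.le))
      (M₁ := l ^ α) (M₂ := (b - y) ^ α)
      (fun s hs => by
        rw [abs_rpow_pos (hx0.trans_le hs.1)]
        exact rpow_base_le hl (by linarith [hs.1]) hα2.le)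
      (fun s hs => by
        rw [abs_rpow_pos (by linarith [hs.2] : (0:ℝ) < b - s)]
        exact rpow_base_le hby (by linarith [hs.2]) hα2.le)
      hδ
    refine ⟨n, t, hp, hb.trans ?_⟩
    beta_reduce
    have g1 : (y - x)^β ≤ (b - x)^β := Real.rpow_le_rpow (by linarith) (by linarith) hβ.le
    have g3 : (b - y)^α ≤ ((b-x)/2)^α :=
      rpow_base_le (by linarith : (0:ℝ) < (b-x)/2) (by linarith) hα2.le
    have hby0 : (0:ℝ) ≤ (b-y)^α := Real.rpow_nonneg hby.le _
    have h5K : (0:ℝ) ≤ 5*K := by linarith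
    have step : 5*K*(y-x)^β*(l^α*(b-y)^α)
        ≤ 5*K*(b-x)^β*(l^α*((b-x)/2)^α) := by
      refine mul_le_mul (mul_le_mul_of_nonneg_left g1 h5K) ?_ ?_ ?_
      · exact mul_le_mul_of_nonneg_left g3 hlα
      · exact mul_nonneg hlα hby0
      · exact mul_nonneg h5K (Real.rpow_nonneg (by linarith) _)
    refine step.trans (le_of_eq ?_)
    rw [hA]
    have e1 : ((b-x)/2)^α = (b-x)^α * ((2:ℝ)^α)⁻¹ := by
      rw [Real.div_rpow hbx.le (by norm_num), div_eq_mul_inv]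
    have e2 : (2:ℝ)^(-α) = ((2:ℝ)^α)⁻¹ := Real.rpow_neg (by norm_num) α
    have e3 : (b-x)^(α+β) = (b-x)^α * (b-x)^β := Real.rpow_add hbx α β
    rw [e1, e2, e3]
    ring
  obtain ⟨n, t, hp, hb⟩ := main
  exact ⟨n, t, hp, hb⟩

/-- Left Q-region estimate for the kernel `s^α (b-s)^α` on `[u, b/2]`. -/
lemma regL (f : ℝ → ℝ) {T β α K b u δ : ℝ}
    (hα2 : α < 0) (hβ : 0 < β) (hαβ : 0 < α + β) (hK : 0 ≤ K)
    (hf : ∀ x ∈ Set.Icc (0:ℝ) T, ∀ y ∈ Set.Icc (0:ℝ) T, |f x - f y| ≤ K * |x - y| ^ β)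
    (hb0 : 0 < b) (hbT : b ≤ T) (hu : 0 < u) (hub : u < b / 2) (hδ : 0 < δ) :
    ∃ n t, IsPart t n u (b / 2) δ ∧
      |RSum f (fun s => s ^ α * (b - s) ^ α) t n|
        ≤ 5*K*(2:ℝ)^(-α)*(b/2)^α * ((b/2)^(α+β) * cg (α+β)) := by
  have hd : 0 < b / 2 := by linarith
  have h2α : (0:ℝ) ≤ (2:ℝ)^(-α) := Real.rpow_nonneg (by norm_num) _
  have hbα : (0:ℝ) ≤ (b/2)^α := Real.rpow_nonneg hd.le _
  set A := 5*K*(2:ℝ)^(-α)*(b/2)^α with hA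
  have hA0 : 0 ≤ A := by rw [hA]; positivity
  have hWb : ∀ N : ℕ, ∑ k ∈ Finset.range (N + 1), A * ((b/2) / 2 ^ k) ^ (α+β)
      ≤ A * ((b/2)^(α+β) * cg (α+β)) := fun N => hw_pow hA0 hαβ hd N
  have main := famL (p := 0) (d := b/2) f (fun s => s ^ α * (b - s) ^ α)
      (fun r => A * r ^ (α+β)) hd hδ
      (fun r hr => mul_nonneg hA0 (Real.rpow_nonneg hr.le _))
      hWb ?Hb u hu (by linarith : u < 0 + b/2)
  case Hb =>
    intro x y hx hxy hyd hhalf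
    rw [sub_zero] at hhalf
    have hx0 : 0 < x := by linarith
    have h0y : 0 < y := hx0.trans hxy
    have hyb : y < b := by linarith
    have hby : 0 < b - y := by linarith
    obtain ⟨n, t, hp, hb⟩ := block_mul f (fun s => s^α) (fun s => (b-s)^α) hK hβ hf
      hx0.le hxy (by linarith)
      (Or.inr (anti_rpow hx0 hα2.le))
      (Or.inl (mono_brpow hyb hα2.le))
      (M₁ := (y/2) ^ α) (M₂ := (b/2) ^ α)
      (fun s hs => by
        rw [abs_rpow_pos (hx0.trans_le hs.1)]
        exact rpow_base_le (by linarith : (0:ℝ) < y/2) (by linarith [hs.1]) hα2.le)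
      (fun s hs => by
        rw [abs_rpow_pos (by linarith [hs.2] : (0:ℝ) < b - s)]
        exact rpow_base_le hd (by linarith [hs.2]) hα2.le)
      hδ
    refine ⟨n, t, hp, hb.trans ?_⟩
    beta_reduce
    rw [sub_zero]
    have g1 : (y - x)^β ≤ y^β := Real.rpow_le_rpow (by linarith) (by linarith) hβ.le
    have hy20 : (0:ℝ) ≤ (y/2)^α := Real.rpow_nonneg (by linarith) _
    have h5K : (0:ℝ) ≤ 5*K := by linarith
    have step : 5*K*(y-x)^β*((y/2)^α*(b/2)^α)
        ≤ 5*K*y^β*((y/2)^α*(b/2)^α) := by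
      refine mul_le_mul_of_nonneg_right (mul_le_mul_of_nonneg_left g1 h5K) ?_
      exact mul_nonneg hy20 hbα
    refine step.trans (le_of_eq ?_)
    rw [hA]
    have e1 : (y/2)^α = y^α * ((2:ℝ)^α)⁻¹ := by
      rw [Real.div_rpow h0y.le (by norm_num), div_eq_mul_inv]
    have e2 : (2:ℝ)^(-α) = ((2:ℝ)^α)⁻¹ := Real.rpow_neg (by norm_num) α
    have e3 : y^(α+β) = y^α * y^β := Real.rpow_add h0y α β
    rw [e1, e2, e3]
    ring
  obtain ⟨n, t, hp, hb⟩ := main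
  rw [zero_add] at hp
  exact ⟨n, t, hp, hb⟩

noncomputable def C3 (α β : ℝ) : ℝ := 5 * (2:ℝ) ^ (-α) * cg (α+β)
noncomputable def C4 (α β : ℝ) : ℝ := 5 * (2:ℝ) ^ (β-α) * cg (α+β)

lemma IsPart.weaken {t : ℕ → ℝ} {n : ℕ} {u v δ δ' : ℝ} (h : IsPart t n u v δ)
    (hδ : δ ≤ δ') : IsPart t n u v δ' :=
  ⟨h.pos, h.left, h.right, h.lt, fun i hi => (h.mesh i hi).trans hδ⟩

lemma convQ {α β K x h : ℝ} (hα2 : α < 0) (hβ : 0 < β) (hθ0 : 0 < 2*α+β) (hK : 0 ≤ K)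
    (hx : 0 < x) (hxh : x ≤ h) :
    5*K*(2:ℝ)^(-α)*x^α * (x^(α+β) * cg (α+β)) ≤ C3 α β * K * h^(2*α+β) := by
  have hαβ : 0 < α + β := by linarith
  have hcg : 0 ≤ cg (α+β) := cg_nonneg hαβ
  have e1 : x^α * x^(α+β) = x^(2*α+β) := by
    rw [← Real.rpow_add hx]; congr 1; ring
  have g : x^(2*α+β) ≤ h^(2*α+β) := Real.rpow_le_rpow hx.le hxh hθ0.le
  have h2 : (0:ℝ) ≤ (2:ℝ)^(-α) := Real.rpow_nonneg (by norm_num) _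
  calc 5*K*(2:ℝ)^(-α)*x^α * (x^(α+β) * cg (α+β))
      = 5*K*(2:ℝ)^(-α)*cg (α+β) * (x^α * x^(α+β)) := by ring
    _ = 5*K*(2:ℝ)^(-α)*cg (α+β) * x^(2*α+β) := by rw [e1]
    _ ≤ 5*K*(2:ℝ)^(-α)*cg (α+β) * h^(2*α+β) := by
        refine mul_le_mul_of_nonneg_left g ?_
        positivity
    _ = C3 α β * K * h^(2*α+β) := by rw [C3]; ring

lemma convM {α β K a b c : ℝ} (hα2 : α < 0) (hβ : 0 < β) (hαβ : 0 < α+β) (hK : 0 ≤ K)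
    (ha : 0 < a) (hab : a < b) (hha : b - a ≤ a) (hc : 0 < c) (hch : c ≤ b - a) :
    5*K*(2:ℝ)^(-α)*(a/2)^α * ((b - (a - c))^(α+β) * cg (α+β))
      ≤ C4 α β * K * (b-a)^(2*α+β) := by
  have hh : 0 < b - a := sub_pos.mpr hab
  have hh2 : 0 < (b-a)/2 := by linarith
  have hcg : 0 ≤ cg (α+β) := cg_nonneg hαβ
  have h2 : (0:ℝ) ≤ (2:ℝ)^(-α) := Real.rpow_nonneg (by norm_num) _
  have g1 : (a/2)^α ≤ ((b-a)/2)^α := rpow_base_le hh2 (by linarith) hα2.le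
  have g2 : (b - (a - c))^(α+β) ≤ (2*(b-a))^(α+β) :=
    Real.rpow_le_rpow (by linarith) (by linarith) hαβ.le
  have hstep : 5*K*(2:ℝ)^(-α)*(a/2)^α * ((b - (a - c))^(α+β) * cg (α+β))
      ≤ 5*K*(2:ℝ)^(-α)*((b-a)/2)^α * ((2*(b-a))^(α+β) * cg (α+β)) := by
    have hb1 : (0:ℝ) ≤ (b - (a - c))^(α+β) := Real.rpow_nonneg (by linarith) _
    have hb2 : (0:ℝ) ≤ ((b-a)/2)^α := Real.rpow_nonneg hh2.le _
    have h5K : (0:ℝ) ≤ 5*K*(2:ℝ)^(-α) := by positivity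
    refine mul_le_mul (mul_le_mul_of_nonneg_left g1 h5K)
      (mul_le_mul_of_nonneg_right g2 hcg) ?_ ?_
    · exact mul_nonneg hb1 hcg
    · exact mul_nonneg h5K hb2
  refine hstep.trans (le_of_eq ?_)
  have e1 : ((b-a)/2)^α = (b-a)^α * ((2:ℝ)^α)⁻¹ := by
    rw [Real.div_rpow hh.le (by norm_num), div_eq_mul_inv]
  have e2 : (2*(b-a))^(α+β) = (2:ℝ)^(α+β) * (b-a)^(α+β) :=
    Real.mul_rpow (by norm_num) hh.le
  have e3 : (b-a)^(2*α+β) = (b-a)^α * (b-a)^(α+β) := by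
    rw [← Real.rpow_add hh]; congr 1; ring
  have e4 : (2:ℝ)^(β-α) = (2:ℝ)^(-α) * ((2:ℝ)^α)⁻¹ * (2:ℝ)^(α+β) := by
    rw [← Real.rpow_neg (by norm_num : (0:ℝ) ≤ 2) α]
    rw [← Real.rpow_add (by norm_num : (0:ℝ) < 2), ← Real.rpow_add (by norm_num : (0:ℝ) < 2)]
    congr 1
    ring
  rw [C4, e1, e2, e3, e4]
  ring

lemma C1_nonneg {α β : ℝ} (hα2 : α < 0) (hαβ : 0 < α + β) : 0 ≤ C1 α β := by
  have h1 : (0:ℝ) ≤ (2:ℝ)^(-α) := Real.rpow_nonneg (by norm_num) _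
  have h2 : (0:ℝ) ≤ (-α)^(2*α+β) := Real.rpow_nonneg (by linarith) _
  have h3 := cg_nonneg hαβ
  rw [C1]; positivity

lemma C2_nonneg {α β : ℝ} (hα2 : α < 0) (hαβ : 0 < α + β) : 0 ≤ C2 α β := by
  have h1 : (0:ℝ) ≤ (2:ℝ)^(α+β) := Real.rpow_nonneg (by norm_num) _
  have h2 : (0:ℝ) ≤ (-α)^(2*α+β) := Real.rpow_nonneg (by linarith) _
  have h3 := cg_nonneg (by linarith : (0:ℝ) < -α)
  rw [C2]; positivity

lemma C3_nonneg {α β : ℝ} (hαβ : 0 < α + β) : 0 ≤ C3 α β := by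
  have h1 : (0:ℝ) ≤ (2:ℝ)^(-α) := Real.rpow_nonneg (by norm_num) _
  have h3 := cg_nonneg hαβ
  rw [C3]; positivity

lemma C4_nonneg {α β : ℝ} (hαβ : 0 < α + β) : 0 ≤ C4 α β := by
  have h1 : (0:ℝ) ≤ (2:ℝ)^(β-α) := Real.rpow_nonneg (by norm_num) _
  have h3 := cg_nonneg hαβ
  rw [C4]; positivity

lemma abs_add₃ (x1 x2 x3 : ℝ) : |x1 + x2 + x3| ≤ |x1| + |x2| + |x3| := by
  calc |x1 + x2 + x3| ≤ |x1 + x2| + |x3| := abs_add_le _ _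
    _ ≤ |x1| + |x2| + |x3| := by linarith [abs_add_le x1 x2]

lemma abs_add₅ (x1 x2 x3 x4 x5 : ℝ) :
    |x1 + x2 + x3 + x4 + x5| ≤ |x1| + |x2| + |x3| + |x4| + |x5| := by
  calc |x1 + x2 + x3 + x4 + x5| ≤ |x1 + x2 + x3| + |x4| + |x5| := by
        calc |x1 + x2 + x3 + x4 + x5| ≤ |x1 + x2 + x3 + x4| + |x5| := abs_add_le _ _
          _ ≤ |x1 + x2 + x3| + |x4| + |x5| := by linarith [abs_add_le (x1 + x2 + x3) x4]
    _ ≤ |x1| + |x2| + |x3| + |x4| + |x5| := by linarith [abs_add₃ x1 x2 x3]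

end Prop6


/-- Proposition A.6(2) of the paper: for `α ∈ (-1/2,0)`, `β ∈ (0,1]` with
`0 < 2α + β ≤ 1`, `f` `β`-Hölder on `[0,T]` with constant `K`, and
`g(t) = ∫₀^t s^α (t-s)^α df(s)` (improper Riemann–Stieltjes integral, limit of
`∫_c^{t-c}` as `c → 0⁺`), one has `|g(b) - g(a)| ≤ C K (b-a)^{2α+β}`
for all `0 ≤ a < b ≤ T`, i.e. `g ∈ C^{2α+β}([0,T])`. -/
theorem stmt7 (T β α K : ℝ) (f g : ℝ → ℝ) (G : ℝ → ℝ → ℝ)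
    (hα : α ∈ Set.Ioo (-(1/2) : ℝ) 0) (hβ : 0 < β) (hβ1 : β ≤ 1)
    (h2αβ : 0 < 2 * α + β) (h2αβ1 : 2 * α + β ≤ 1)
    (hT : 0 < T) (hK : 0 ≤ K)
    (hf : ∀ x ∈ Set.Icc (0:ℝ) T, ∀ y ∈ Set.Icc (0:ℝ) T, |f x - f y| ≤ K * |x - y| ^ β)
    (hg0 : g 0 = 0)
    (hG : ∀ t ∈ Set.Ioc (0:ℝ) T, ∀ c : ℝ, 0 < c → 2 * c < t →
      RSIntegral (fun s => s ^ α * (t - s) ^ α) f c (t - c) (G t c))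
    (hg : ∀ t ∈ Set.Ioc (0:ℝ) T,
      Filter.Tendsto (fun c => G t c) (nhdsWithin 0 (Set.Ioi 0)) (nhds (g t))) :
    ∃ C > (0:ℝ), ∀ a b : ℝ, 0 ≤ a → a < b → b ≤ T →
      |g b - g a| ≤ C * K * (b - a) ^ (2 * α + β) := by
  obtain ⟨hα1, hα2⟩ := hα
  have hαβ : 0 < α + β := by linarith
  have hC1 := Prop6.C1_nonneg hα2 hαβ
  have hC2 := Prop6.C2_nonneg hα2 hαβ
  have hC3 := Prop6.C3_nonneg (α := α) (β := β) hαβ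
  have hC4 := Prop6.C4_nonneg (α := α) (β := β) hαβ
  refine ⟨Prop6.C1 α β + Prop6.C2 α β + Prop6.C3 α β + Prop6.C3 α β + Prop6.C4 α β + 1,
    by linarith, ?_⟩
  intro a b ha0 hab hbT
  have hb0 : 0 < b := lt_of_le_of_lt ha0 hab
  have hh : 0 < b - a := sub_pos.mpr hab
  have hbIoc : b ∈ Set.Ioc (0:ℝ) T := ⟨hb0, hbT⟩
  have hKb : 0 ≤ K * (b - a) ^ (2*α+β) := mul_nonneg hK (Real.rpow_nonneg hh.le _)
  have key : ∀ ε : ℝ, 0 < ε → |g b - g a| ≤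
      (Prop6.C1 α β + Prop6.C2 α β + Prop6.C3 α β + Prop6.C3 α β + Prop6.C4 α β + 1)
        * K * (b - a) ^ (2 * α + β) + ε := by
    intro ε hε
    have hε4 : 0 < ε/4 := by linarith
    obtain ⟨ηb, hηb0, hηb⟩ := Metric.tendsto_nhdsWithin_nhds.mp (hg b hbIoc) (ε/4) hε4
    rcases eq_or_lt_of_le ha0 with rfl | ha
    · -- a = 0
      set c := min (ηb/2) (b/4) with hcdef
      have hc0 : 0 < c := lt_min (by linarith) (by linarith)
      have hcηb : c < ηb := lt_of_le_of_lt (min_le_left _ _) (by linarith)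
      have hcb4 : c ≤ b/4 := min_le_right _ _
      have hcb2 : c < b/2 := by linarith
      obtain ⟨δb, hδb0, hδb⟩ := hG b hbIoc c hc0 (by linarith) (ε/4) hε4
      obtain ⟨n₁, t₁, hp₁, hb₁⟩ := Prop6.regL f hα2 hβ hαβ hK hf hb0 hbT hc0 hcb2 hδb0
      obtain ⟨n₂, t₂, hp₂, hb₂⟩ := Prop6.regR f hα2 hβ hαβ hK hf hb0 hbT
        (l := b/2) (d := b/2) (c := c) (by linarith) (by linarith) (by linarith) hc0 hcb2 hδb0
      rw [show b - b/2 = b/2 by ring] at hp₂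
      have hend : t₁ n₁ = t₂ 0 := by rw [hp₁.right, hp₂.left]
      have hpp := Prop6.cat_isPart hp₁ hp₂
      have hsum := Prop6.cat_rsum (n₂ := n₂) f (fun s => s^α*(b-s)^α) hend
      have happ : |Prop6.RSum f (fun s => s^α*(b-s)^α) (Prop6.cat t₁ t₂ n₁) (n₁+n₂) - G b c|
          ≤ ε/4 :=
        hδb (n₁+n₂) (Prop6.cat t₁ t₂ n₁) (Prop6.cat t₁ t₂ n₁)
          hpp.pos hpp.left hpp.right hpp.lt hpp.mesh
          (fun i hi => ⟨le_rfl, (hpp.lt i hi).le⟩)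
      have hGg : |G b c - g b| ≤ ε/4 := by
        have h1 := hηb (Set.mem_Ioi.mpr hc0)
          (by rw [Real.dist_eq, sub_zero, abs_of_pos hc0]; exact hcηb)
        rw [Real.dist_eq] at h1
        exact h1.le
      have hQ1 : |Prop6.RSum f (fun s => s^α*(b-s)^α) t₁ n₁|
          ≤ Prop6.C3 α β * K * (b-0)^(2*α+β) := by
        refine hb₁.trans ?_
        rw [sub_zero]
        exact Prop6.convQ hα2 hβ h2αβ hK (by linarith) (by linarith)
      have hQ2 : |Prop6.RSum f (fun s => s^α*(b-s)^α) t₂ n₂|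
          ≤ Prop6.C3 α β * K * (b-0)^(2*α+β) := by
        refine hb₂.trans ?_
        rw [sub_zero]
        exact Prop6.convQ hα2 hβ h2αβ hK (by linarith) (by linarith)
      rw [hg0]
      have hdec : g b - 0 = (g b - G b c)
          + (G b c - Prop6.RSum f (fun s => s^α*(b-s)^α) (Prop6.cat t₁ t₂ n₁) (n₁+n₂))
          + (Prop6.RSum f (fun s => s^α*(b-s)^α) t₁ n₁
            + Prop6.RSum f (fun s => s^α*(b-s)^α) t₂ n₂) := by
        rw [← hsum]; ring
      have htri := Prop6.abs_add₃ (g b - G b c)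
          (G b c - Prop6.RSum f (fun s => s^α*(b-s)^α) (Prop6.cat t₁ t₂ n₁) (n₁+n₂))
          (Prop6.RSum f (fun s => s^α*(b-s)^α) t₁ n₁
            + Prop6.RSum f (fun s => s^α*(b-s)^α) t₂ n₂)
      rw [← hdec] at htri
      have h1 : |g b - G b c| ≤ ε/4 := by rw [abs_sub_comm]; exact hGg
      have h2 : |G b c - Prop6.RSum f (fun s => s^α*(b-s)^α) (Prop6.cat t₁ t₂ n₁) (n₁+n₂)|
          ≤ ε/4 := by rw [abs_sub_comm]; exact happ
      have h3 := (abs_add_le (Prop6.RSum f (fun s => s^α*(b-s)^α) t₁ n₁)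
        (Prop6.RSum f (fun s => s^α*(b-s)^α) t₂ n₂))
      have hKb0 : 0 ≤ K * (b-0)^(2*α+β) :=
        mul_nonneg hK (Real.rpow_nonneg (by linarith) _)
      have expand : (Prop6.C1 α β + Prop6.C2 α β + Prop6.C3 α β + Prop6.C3 α β
            + Prop6.C4 α β + 1) * K * (b - 0) ^ (2*α+β)
          = Prop6.C1 α β * (K * (b-0)^(2*α+β)) + Prop6.C2 α β * (K * (b-0)^(2*α+β))
            + Prop6.C3 α β * K * (b-0)^(2*α+β) + Prop6.C3 α β * K * (b-0)^(2*α+β)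
            + Prop6.C4 α β * (K * (b-0)^(2*α+β)) + K * (b-0)^(2*α+β) := by ring
      rw [expand]
      have p1 : 0 ≤ Prop6.C1 α β * (K * (b-0)^(2*α+β)) := mul_nonneg hC1 hKb0
      have p2 : 0 ≤ Prop6.C2 α β * (K * (b-0)^(2*α+β)) := mul_nonneg hC2 hKb0
      have p4 : 0 ≤ Prop6.C4 α β * (K * (b-0)^(2*α+β)) := mul_nonneg hC4 hKb0
      linarith
    · -- 0 < a
      have haT : a ≤ T := le_of_lt (lt_of_lt_of_le hab hbT)
      have haIoc : a ∈ Set.Ioc (0:ℝ) T := ⟨ha, haT⟩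
      obtain ⟨ηa, hηa0, hηa⟩ := Metric.tendsto_nhdsWithin_nhds.mp (hg a haIoc) (ε/4) hε4
      set c := min (min (ηa/2) (ηb/2)) (min (a/4) ((b-a)/2)) with hcdef
      have hc0 : 0 < c :=
        lt_min (lt_min (by linarith) (by linarith)) (lt_min (by linarith) (by linarith))
      have hcηa : c < ηa :=
        lt_of_le_of_lt ((min_le_left _ _).trans (min_le_left _ _)) (by linarith)
      have hcηb : c < ηb :=
        lt_of_le_of_lt ((min_le_left _ _).trans (min_le_right _ _)) (by linarith)
      have hca4 : c ≤ a/4 := (min_le_right _ _).trans (min_le_left _ _)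
      have hch2 : c ≤ (b-a)/2 := (min_le_right _ _).trans (min_le_right _ _)
      have hca2 : c < a/2 := by linarith
      have hch : c ≤ b - a := by linarith
      obtain ⟨δa, hδa0, hδa⟩ := hG a haIoc c hc0 (by linarith) (ε/4) hε4
      obtain ⟨δb, hδb0, hδb⟩ := hG b hbIoc c hc0 (by linarith) (ε/4) hε4
      have hδ0 : 0 < min δa δb := lt_min hδa0 hδb0
      obtain ⟨n₁, t₁, hp₁, hb₁⟩ :=
        Prop6.regE1L f hα2 hβ h2αβ h2αβ1 hK hf ha hab hbT hc0 hca2 hδ0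
      obtain ⟨n₂, t₂, hp₂, hb₂⟩ :=
        Prop6.regE1R f hα2 hβ h2αβ h2αβ1 hK hf ha hab hbT hc0 hca2 hδ0
      obtain ⟨nQ, tQ, hpQ, hbQ⟩ : ∃ nQ tQ, Prop6.IsPart tQ nQ (a - c) (b - c) (min δa δb) ∧
          |Prop6.RSum f (fun s => s^α*(b-s)^α) tQ nQ|
            ≤ (Prop6.C3 α β + Prop6.C3 α β + Prop6.C4 α β) * K * (b-a)^(2*α+β) := by
        rcases lt_or_ge a (b/2) with hsplit | hsplit
        · have hhb2 : b/2 ≤ b - a := by linarith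
          obtain ⟨n₃, t₃, hp₃, hb₃⟩ := Prop6.regL f hα2 hβ hαβ hK hf hb0 hbT
            (u := a - c) (by linarith) (by linarith) hδ0
          obtain ⟨n₄, t₄, hp₄, hb₄⟩ := Prop6.regR f hα2 hβ hαβ hK hf hb0 hbT
            (l := b/2) (d := b/2) (c := c) (by linarith) (by linarith) (by linarith)
            hc0 (by linarith) hδ0
          rw [show b - b/2 = b/2 by ring] at hp₄
          refine ⟨n₃+n₄, Prop6.cat t₃ t₄ n₃, Prop6.cat_isPart hp₃ hp₄, ?_⟩
          rw [Prop6.cat_rsum (n₂ := n₄) f _ (by rw [hp₃.right, hp₄.left])]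
          have q3 := hb₃.trans (Prop6.convQ hα2 hβ h2αβ hK (by linarith : (0:ℝ) < b/2) hhb2)
          have q4 := hb₄.trans (Prop6.convQ hα2 hβ h2αβ hK (by linarith : (0:ℝ) < b/2) hhb2)
          have htri := abs_add_le (Prop6.RSum f (fun s => s^α*(b-s)^α) t₃ n₃)
            (Prop6.RSum f (fun s => s^α*(b-s)^α) t₄ n₄)
          have expand : (Prop6.C3 α β + Prop6.C3 α β + Prop6.C4 α β) * K * (b-a)^(2*α+β)
              = Prop6.C3 α β * K * (b-a)^(2*α+β) + Prop6.C3 α β * K * (b-a)^(2*α+β)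
                + Prop6.C4 α β * (K * (b-a)^(2*α+β)) := by ring
          rw [expand]
          have p4 : 0 ≤ Prop6.C4 α β * (K * (b-a)^(2*α+β)) := mul_nonneg hC4 hKb
          linarith
        · have hha : b - a ≤ a := by linarith
          obtain ⟨n₃, t₃, hp₃, hb₃⟩ := Prop6.regR f hα2 hβ hαβ hK hf hb0 hbT
            (l := a/2) (d := b - (a - c)) (c := c) (by linarith)
            (by linarith : a/2 ≤ b - (b - (a - c))) (by linarith) hc0
            (by linarith : c < b - (a - c)) hδ0
          rw [show b - (b - (a - c)) = a - c by ring] at hp₃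
          refine ⟨n₃, t₃, hp₃, hb₃.trans ?_⟩
          refine (Prop6.convM hα2 hβ hαβ hK ha hab hha hc0 hch).trans ?_
          have expand : (Prop6.C3 α β + Prop6.C3 α β + Prop6.C4 α β) * K * (b-a)^(2*α+β)
              = Prop6.C3 α β * (K * (b-a)^(2*α+β)) + Prop6.C3 α β * (K * (b-a)^(2*α+β))
                + Prop6.C4 α β * K * (b-a)^(2*α+β) := by ring
          rw [expand]
          have p3 : 0 ≤ Prop6.C3 α β * (K * (b-a)^(2*α+β)) := mul_nonneg hC3 hKb
          linarith
      -- assemble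
      have hendA : t₁ n₁ = t₂ 0 := by rw [hp₁.right, hp₂.left]
      have hpa := Prop6.cat_isPart hp₁ hp₂
      have hendB : (Prop6.cat t₁ t₂ n₁) (n₁+n₂) = tQ 0 := by rw [hpa.right, hpQ.left]
      have hpb := Prop6.cat_isPart hpa hpQ
      have hpaW := hpa.weaken (min_le_left δa δb)
      have hpbW := hpb.weaken (min_le_right δa δb)
      have happa : |Prop6.RSum f (fun s => s^α*(a-s)^α) (Prop6.cat t₁ t₂ n₁) (n₁+n₂) - G a c|
          ≤ ε/4 :=
        hδa (n₁+n₂) (Prop6.cat t₁ t₂ n₁) (Prop6.cat t₁ t₂ n₁)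
          hpaW.pos hpaW.left hpaW.right hpaW.lt hpaW.mesh
          (fun i hi => ⟨le_rfl, (hpaW.lt i hi).le⟩)
      have happb : |Prop6.RSum f (fun s => s^α*(b-s)^α)
            (Prop6.cat (Prop6.cat t₁ t₂ n₁) tQ (n₁+n₂)) ((n₁+n₂)+nQ) - G b c| ≤ ε/4 :=
        hδb ((n₁+n₂)+nQ) (Prop6.cat (Prop6.cat t₁ t₂ n₁) tQ (n₁+n₂))
          (Prop6.cat (Prop6.cat t₁ t₂ n₁) tQ (n₁+n₂))
          hpbW.pos hpbW.left hpbW.right hpbW.lt hpbW.mesh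
          (fun i hi => ⟨le_rfl, (hpbW.lt i hi).le⟩)
      have hGga : |G a c - g a| ≤ ε/4 := by
        have h1 := hηa (Set.mem_Ioi.mpr hc0)
          (by rw [Real.dist_eq, sub_zero, abs_of_pos hc0]; exact hcηa)
        rw [Real.dist_eq] at h1
        exact h1.le
      have hGgb : |G b c - g b| ≤ ε/4 := by
        have h1 := hηb (Set.mem_Ioi.mpr hc0)
          (by rw [Real.dist_eq, sub_zero, abs_of_pos hc0]; exact hcηb)
        rw [Real.dist_eq] at h1
        exact h1.le
      have hsum1 : Prop6.RSum f (fun s => s^α*(b-s)^α)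
            (Prop6.cat (Prop6.cat t₁ t₂ n₁) tQ (n₁+n₂)) ((n₁+n₂)+nQ)
          = Prop6.RSum f (fun s => s^α*(b-s)^α) (Prop6.cat t₁ t₂ n₁) (n₁+n₂)
            + Prop6.RSum f (fun s => s^α*(b-s)^α) tQ nQ :=
        Prop6.cat_rsum (n₂ := nQ) f _ hendB
      have hsum2 : Prop6.RSum f (fun s => s^α*((b-s)^α - (a-s)^α)) (Prop6.cat t₁ t₂ n₁) (n₁+n₂)
          = Prop6.RSum f (fun s => s^α*(b-s)^α) (Prop6.cat t₁ t₂ n₁) (n₁+n₂)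
            - Prop6.RSum f (fun s => s^α*(a-s)^α) (Prop6.cat t₁ t₂ n₁) (n₁+n₂) := by
        rw [← Prop6.rsum_sub]
        exact Prop6.rsum_congr f _ _ (fun s => by ring)
      have hsum3 : Prop6.RSum f (fun s => s^α*((b-s)^α - (a-s)^α)) (Prop6.cat t₁ t₂ n₁) (n₁+n₂)
          = Prop6.RSum f (fun s => s^α*((b-s)^α - (a-s)^α)) t₁ n₁
            + Prop6.RSum f (fun s => s^α*((b-s)^α - (a-s)^α)) t₂ n₂ :=
        Prop6.cat_rsum (n₂ := n₂) f _ hendA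
      have hdec : g b - g a = (g b - G b c)
          + (G b c - Prop6.RSum f (fun s => s^α*(b-s)^α)
              (Prop6.cat (Prop6.cat t₁ t₂ n₁) tQ (n₁+n₂)) ((n₁+n₂)+nQ))
          + (Prop6.RSum f (fun s => s^α*((b-s)^α - (a-s)^α)) t₁ n₁
            + Prop6.RSum f (fun s => s^α*((b-s)^α - (a-s)^α)) t₂ n₂
            + Prop6.RSum f (fun s => s^α*(b-s)^α) tQ nQ)
          + (Prop6.RSum f (fun s => s^α*(a-s)^α) (Prop6.cat t₁ t₂ n₁) (n₁+n₂) - G a c)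
          + (G a c - g a) := by
        have e := hsum3.symm.trans hsum2
        rw [hsum1]
        linarith [e]
      have htri := Prop6.abs_add₅ (g b - G b c)
          (G b c - Prop6.RSum f (fun s => s^α*(b-s)^α)
              (Prop6.cat (Prop6.cat t₁ t₂ n₁) tQ (n₁+n₂)) ((n₁+n₂)+nQ))
          (Prop6.RSum f (fun s => s^α*((b-s)^α - (a-s)^α)) t₁ n₁
            + Prop6.RSum f (fun s => s^α*((b-s)^α - (a-s)^α)) t₂ n₂
            + Prop6.RSum f (fun s => s^α*(b-s)^α) tQ nQ)
          (Prop6.RSum f (fun s => s^α*(a-s)^α) (Prop6.cat t₁ t₂ n₁) (n₁+n₂) - G a c)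
          (G a c - g a)
      rw [← hdec] at htri
      have h1 : |g b - G b c| ≤ ε/4 := by rw [abs_sub_comm]; exact hGgb
      have h2 : |G b c - Prop6.RSum f (fun s => s^α*(b-s)^α)
            (Prop6.cat (Prop6.cat t₁ t₂ n₁) tQ (n₁+n₂)) ((n₁+n₂)+nQ)| ≤ ε/4 := by
        rw [abs_sub_comm]; exact happb
      have h3 := Prop6.abs_add₃ (Prop6.RSum f (fun s => s^α*((b-s)^α - (a-s)^α)) t₁ n₁)
        (Prop6.RSum f (fun s => s^α*((b-s)^α - (a-s)^α)) t₂ n₂)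
        (Prop6.RSum f (fun s => s^α*(b-s)^α) tQ nQ)
      have expand : (Prop6.C1 α β + Prop6.C2 α β + Prop6.C3 α β + Prop6.C3 α β
            + Prop6.C4 α β + 1) * K * (b - a) ^ (2*α+β)
          = Prop6.C1 α β * K * (b-a)^(2*α+β) + Prop6.C2 α β * K * (b-a)^(2*α+β)
            + (Prop6.C3 α β + Prop6.C3 α β + Prop6.C4 α β) * K * (b-a)^(2*α+β)
            + K * (b-a)^(2*α+β) := by ring
      rw [expand]
      linarith
  have key' : ∀ ε > (0:ℝ), |g b - g a| ≤
      (Prop6.C1 α β + Prop6.C2 α β + Prop6.C3 α β + Prop6.C3 α β + Prop6.C4 α β + 1)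
        * K * (b - a) ^ (2 * α + β) + ε := fun ε hε => key ε hε
  exact le_of_forall_pos_le_add key'
end

section
/- Let ν be a finite nonzero Borel measure on [0,t] singular with respect to Lebesgue measure, let α ∈ (0, 1/4) and β = 2/(1+2α). Then lim_{n→∞} ∑_{i=1}^n (∫₀^{t_i^n} ((t_i^n - s)^α - (t_{i-1}^n - s)₊^α)² dν(s))^{β/2} = 0, where t_i^n = it/n. -/
open MeasureTheory Filter Set

lemma rpow_secant {α : ℝ} (h0 : 0 < α) (h1 : α < 1) {h x y : ℝ} (hh : 0 ≤ h)
    (hy : 0 ≤ y) (hxy : y ≤ x) :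
    (x + h) ^ α - x ^ α ≤ (y + h) ^ α - y ^ α := by
  rcases eq_or_lt_of_le hxy with rfl | hlt
  · exact le_rfl
  rcases eq_or_lt_of_le hh with rfl | hh'
  · simp
  have hx : 0 ≤ x := hy.trans hxy
  have hcon := Real.concaveOn_rpow h0.le h1.le
  have hd : 0 < x + h - y := by linarith
  set lam : ℝ := h / (x + h - y) with hlam
  have hl0 : 0 ≤ lam := div_nonneg hh (le_of_lt hd)
  have hl1 : lam ≤ 1 := by rw [hlam, div_le_one hd]; linarith
  have hk : lam * (x + h - y) = h := by rw [hlam]; exact div_mul_cancel₀ h hd.ne'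
  have e1 : lam * y + (1 - lam) * (x + h) = x := by
    linear_combination (-1:ℝ) * hk
  have e2 : (1 - lam) * y + lam * (x + h) = y + h := by
    linear_combination hk
  have m1 : y ∈ Set.Ici (0:ℝ) := hy
  have m2 : x + h ∈ Set.Ici (0:ℝ) := by simp; linarith
  have c1 := hcon.2 m1 m2 hl0 (by linarith : (0:ℝ) ≤ 1 - lam) (by ring : lam + (1 - lam) = 1)
  have c2 := hcon.2 m1 m2 (by linarith : (0:ℝ) ≤ 1 - lam) hl0 (by ring : (1 - lam) + lam = 1)
  simp only [smul_eq_mul] at c1 c2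
  rw [e1] at c1
  rw [e2] at c2
  linarith

noncomputable def cc (α : ℝ) (m : ℕ) : ℝ :=
  if m = 0 then 1 else (m : ℝ) ^ α - ((m : ℝ) - 1) ^ α

lemma cc_nonneg {α : ℝ} (hα : 0 ≤ α) (m : ℕ) : 0 ≤ cc α m := by
  unfold cc
  rcases Nat.eq_zero_or_pos m with rfl | hm
  · simp
  · rw [if_neg hm.ne']
    have h1 : (1:ℝ) ≤ (m:ℝ) := by exact_mod_cast hm
    have := Real.rpow_le_rpow (by linarith : (0:ℝ) ≤ (m:ℝ) - 1) (by linarith : (m:ℝ) - 1 ≤ (m:ℝ)) hα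
    linarith

lemma cc_eq {α : ℝ} {m : ℕ} (hm : m ≠ 0) :
    cc α m = (((m:ℝ) - 1) + 1) ^ α - ((m:ℝ) - 1) ^ α := by
  unfold cc; rw [if_neg hm]; ring_nf

lemma cc_anti {α : ℝ} (h0 : 0 < α) (h1 : α < 1) {k m : ℕ} (hk : k ≠ 0) (hkm : k ≤ m) :
    cc α m ≤ cc α k := by
  have hm : m ≠ 0 := by omega
  rw [cc_eq hm, cc_eq hk]
  have h1k : (1:ℝ) ≤ (k:ℝ) := by exact_mod_cast Nat.one_le_iff_ne_zero.2 hk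
  have h2 : (k:ℝ) ≤ (m:ℝ) := by exact_mod_cast hkm
  exact rpow_secant h0 h1 zero_le_one (by linarith) (by linarith)

lemma cc_le {α : ℝ} (h0 : 0 < α) (h1 : α < 1) {m : ℕ} (hm : m ≠ 0) :
    cc α m ≤ (m : ℝ) ^ (α - 1) := by
  have hmR : (0:ℝ) < (m:ℝ) := by exact_mod_cast Nat.pos_of_ne_zero hm
  have tele : ∑ k ∈ Finset.range m, cc α (k + 1) = (m:ℝ) ^ α := by
    have : ∀ k : ℕ, cc α (k + 1) = ((k:ℝ) + 1) ^ α - (k:ℝ) ^ α := by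
      intro k
      unfold cc
      rw [if_neg (Nat.succ_ne_zero k)]
      push_cast
      ring_nf
    have t2 := Finset.sum_range_sub (fun k => ((k:ℝ)) ^ α) m
    calc ∑ k ∈ Finset.range m, cc α (k + 1)
        = ∑ k ∈ Finset.range m, ((((k+1 : ℕ)):ℝ) ^ α - ((k:ℕ):ℝ) ^ α) := by
          apply Finset.sum_congr rfl
          intro k _
          rw [this k]
          push_cast
          ring
      _ = ((m:ℕ):ℝ) ^ α - ((0:ℕ):ℝ) ^ α := t2
      _ = (m:ℝ) ^ α := by rw [Nat.cast_zero, Real.zero_rpow h0.ne']; ring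
  have hbound : (m:ℝ) * cc α m ≤ (m:ℝ) ^ α := by
    rw [← tele]
    calc (m:ℝ) * cc α m = ∑ _k ∈ Finset.range m, cc α m := by
          rw [Finset.sum_const, Finset.card_range, nsmul_eq_mul]
      _ ≤ ∑ k ∈ Finset.range m, cc α (k + 1) := by
          apply Finset.sum_le_sum
          intro k hk
          exact cc_anti h0 h1 (Nat.succ_ne_zero k) (Nat.succ_le_of_lt (Finset.mem_range.1 hk))
  rw [Real.rpow_sub_one hmR.ne', le_div_iff₀ hmR]
  linarith
section
variable {α β : ℝ}

lemma cc_summable {α β : ℝ} (hα0 : 0 < α) (hα4 : α < 1/4) (hβ : β = 2 / (1 + 2 * α)) :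
    Summable (fun m => cc α m ^ β) := by
  have hden : (0:ℝ) < 1 + 2 * α := by linarith
  have hβ0 : 0 < β := by rw [hβ]; positivity
  have hα1 : α < 1 := by linarith
  have hq : 1 < (1 - α) * β := by
    rw [hβ, show (1 - α) * (2 / (1 + 2 * α)) = (1 - α) * 2 / (1 + 2 * α) from by ring,
      one_lt_div hden]
    linarith
  rw [← summable_nat_add_iff 1]
  have hsum : Summable (fun m : ℕ => 1 / ((m + 1 : ℕ) : ℝ) ^ ((1 - α) * β)) := by
    have := Real.summable_one_div_nat_rpow.2 hq
    exact (summable_nat_add_iff 1).2 this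
  apply Summable.of_nonneg_of_le _ _ hsum
  · intro m
    exact Real.rpow_nonneg (cc_nonneg hα0.le _) _
  · intro m
    have hm1 : ((m + 1 : ℕ) : ℝ) ≠ 0 := by positivity
    have hmpos : (0:ℝ) < ((m + 1 : ℕ) : ℝ) := by positivity
    calc cc α (m + 1) ^ β ≤ (((m + 1 : ℕ) : ℝ) ^ (α - 1)) ^ β := by
          apply Real.rpow_le_rpow (cc_nonneg hα0.le _) (cc_le hα0 hα1 (Nat.succ_ne_zero m)) hβ0.le
      _ = ((m + 1 : ℕ) : ℝ) ^ ((α - 1) * β) := by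
          rw [← Real.rpow_mul hmpos.le]
      _ = 1 / ((m + 1 : ℕ) : ℝ) ^ ((1 - α) * β) := by
          rw [one_div, ← Real.rpow_neg hmpos.le]
          ring_nf

end

open scoped ENNReal in
lemma holder_sum {ι : Type*} (A : Finset ι) (a : ι → ℝ≥0∞) {p : ℝ} (hp0 : 0 < p) (hp1 : p < 1) :
    ∑ j ∈ A, a j ^ p ≤ (A.card : ℝ≥0∞) ^ (1 - p) * (∑ j ∈ A, a j) ^ p := by
  rcases A.eq_empty_or_nonempty with rfl | hA
  · simp
  have hN : (A.card : ℝ≥0∞) ≠ 0 := by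
    simp [Finset.card_eq_zero, hA.ne_empty]
  have hNt : (A.card : ℝ≥0∞) ≠ ⊤ := ENNReal.natCast_ne_top _
  by_cases htop : ∑ j ∈ A, a j = ⊤
  · rw [htop, ENNReal.top_rpow_of_pos hp0, ENNReal.mul_top]
    · exact le_top
    · exact (ENNReal.rpow_pos (by positivity) hNt).ne'
  have hw : ∑ _j ∈ A, (A.card : ℝ≥0∞)⁻¹ = 1 := by
    rw [Finset.sum_const, nsmul_eq_mul, ENNReal.mul_inv_cancel hN hNt]
  have key := ENNReal.rpow_arith_mean_le_arith_mean_rpow A (fun _ => (A.card : ℝ≥0∞)⁻¹)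
      (fun j => a j ^ p) hw (by rw [le_div_iff₀ hp0]; linarith : (1:ℝ) ≤ 1/p)
  have key2 : ((A.card : ℝ≥0∞)⁻¹ * ∑ j ∈ A, a j ^ p) ^ (1/p) ≤ (A.card : ℝ≥0∞)⁻¹ * ∑ j ∈ A, a j := by
    calc ((A.card : ℝ≥0∞)⁻¹ * ∑ j ∈ A, a j ^ p) ^ (1/p)
        = (∑ j ∈ A, (A.card : ℝ≥0∞)⁻¹ * a j ^ p) ^ (1/p) := by rw [Finset.mul_sum]
      _ ≤ ∑ j ∈ A, (A.card : ℝ≥0∞)⁻¹ * (a j ^ p) ^ (1/p) := key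
      _ = (A.card : ℝ≥0∞)⁻¹ * ∑ j ∈ A, a j := by
          rw [← Finset.mul_sum]
          congr 1
          apply Finset.sum_congr rfl
          intro j _
          rw [← ENNReal.rpow_mul, mul_one_div, div_self hp0.ne', ENNReal.rpow_one]
  have key3 : (A.card : ℝ≥0∞)⁻¹ * ∑ j ∈ A, a j ^ p
      ≤ (A.card : ℝ≥0∞)⁻¹ ^ p * (∑ j ∈ A, a j) ^ p := by
    have := ENNReal.rpow_le_rpow key2 hp0.le
    rwa [← ENNReal.rpow_mul, one_div, inv_mul_cancel₀ hp0.ne', ENNReal.rpow_one,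
      ENNReal.mul_rpow_of_ne_top (ENNReal.inv_ne_top.2 hN) htop] at this
  calc ∑ j ∈ A, a j ^ p
      = (A.card : ℝ≥0∞) * ((A.card : ℝ≥0∞)⁻¹ * ∑ j ∈ A, a j ^ p) := by
        rw [← mul_assoc, ENNReal.mul_inv_cancel hN hNt, one_mul]
    _ ≤ (A.card : ℝ≥0∞) * ((A.card : ℝ≥0∞)⁻¹ ^ p * (∑ j ∈ A, a j) ^ p) :=
        mul_le_mul_right key3 _
    _ = ((A.card : ℝ≥0∞) * (A.card : ℝ≥0∞)⁻¹ ^ p) * (∑ j ∈ A, a j) ^ p := by ring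
    _ = (A.card : ℝ≥0∞) ^ (1 - p) * (∑ j ∈ A, a j) ^ p := by
        congr 1
        rw [ENNReal.inv_rpow, ← ENNReal.rpow_neg, show (1:ℝ) - p = 1 + (-p) by ring,
          ENNReal.rpow_add _ _ hN hNt, ENNReal.rpow_one]

open scoped ENNReal in
lemma sum_rpow_le {ι : Type*} (A : Finset ι) (a : ι → ℝ≥0∞) {p : ℝ} (hp0 : 0 < p) (hp1 : p ≤ 1) :
    (∑ j ∈ A, a j) ^ p ≤ ∑ j ∈ A, a j ^ p := by
  classical
  induction A using Finset.cons_induction with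
  | empty => simp [ENNReal.zero_rpow_of_pos hp0]
  | cons j A hj ih =>
      rw [Finset.sum_cons, Finset.sum_cons]
      exact (ENNReal.rpow_add_le_add_rpow _ _ hp0.le hp1).trans (by gcongr)
open scoped ENNReal

lemma Ioc_pairwiseDisjoint (t : ℝ) (ht : 0 ≤ t) (n : ℕ) :
    (Set.univ : Set ℕ).PairwiseDisjoint
      (fun j => Set.Ioc ((j:ℝ) * t / n) (((j:ℝ) + 1) * t / n)) := by
  have hmain : ∀ a b : ℕ, a < b → Disjoint (Set.Ioc ((a:ℝ)*t/n) (((a:ℝ)+1)*t/n))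
      (Set.Ioc ((b:ℝ)*t/n) (((b:ℝ)+1)*t/n)) := by
    intro a b hab
    rw [Set.Ioc_disjoint_Ioc]
    have h1 : ((a:ℝ)+1) ≤ (b:ℝ) := by exact_mod_cast hab
    have h2 : ((a:ℝ)+1)*t/n ≤ (b:ℝ)*t/n := by gcongr
    exact le_trans (min_le_left _ _) (h2.trans (le_max_right _ _))
  intro i _ j _ hij
  rcases hij.lt_or_gt with h | h
  · exact hmain _ _ h
  · exact (hmain _ _ h).symm

lemma key_singular (t : ℝ) (ht : 0 < t) {p : ℝ} (hp0 : 0 < p) (hp1 : p < 1)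
    (ν : MeasureTheory.Measure ℝ) [MeasureTheory.IsFiniteMeasure ν]
    (hsupp : ν (Set.Icc (0:ℝ) t)ᶜ = 0)
    (hsing : ν.MutuallySingular MeasureTheory.volume) {ε : ℝ≥0∞} (hε : 0 < ε) :
    ∀ᶠ n : ℕ in Filter.atTop,
      ∑ j ∈ Finset.range n, ν (Set.Ioc ((j:ℝ)*t/n) (((j:ℝ)+1)*t/n)) ^ p
        ≤ ε * (n : ℝ≥0∞) ^ (1 - p) := by
  open MeasureTheory Filter Set in
  suffices h : ∀ᶠ n : ℕ in Filter.atTop,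
      ∑ j ∈ Finset.range n, ν (Set.Ioc ((j:ℝ)*t/n) (((j:ℝ)+1)*t/n)) ^ p
        ≤ min ε 1 * (n : ℝ≥0∞) ^ (1 - p) by
    filter_upwards [h] with n hn
    exact hn.trans (mul_le_mul_left (min_le_left _ _) _)
  open MeasureTheory Filter Set in
  set ε₀ := min ε 1 with hε₀def
  have hε₀0 : ε₀ ≠ 0 := (lt_min hε zero_lt_one).ne'
  have hε₀t : ε₀ ≠ ⊤ := (((min_le_right ε 1).trans_lt ENNReal.one_lt_top)).ne
  have h1p : (0:ℝ) < 1 - p := by linarith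
  obtain ⟨S, hSm, hνS, hvolS⟩ := hsing
  set T := Sᶜ ∩ Set.Icc 0 t with hT
  have hTm : MeasurableSet T := hSm.compl.inter measurableSet_Icc
  have hνTc : ν Tᶜ = 0 := by
    have hTc : Tᶜ = S ∪ (Set.Icc (0:ℝ) t)ᶜ := by rw [hT, Set.compl_inter, compl_compl]
    rw [hTc]
    refine le_antisymm ?_ (zero_le)
    refine (MeasureTheory.measure_union_le _ _).trans ?_
    rw [hνS, hsupp, add_zero]
  have hvolT : MeasureTheory.volume T = 0 :=
    le_antisymm ((MeasureTheory.measure_mono Set.inter_subset_left).trans hvolS.le) (zero_le)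
  set ε₁ := (ε₀ / 2) ^ (1/p) with hε₁def
  have hhalf0 : ε₀ / 2 ≠ 0 := (ENNReal.div_pos hε₀0 ENNReal.ofNat_ne_top).ne'
  have hhalft : ε₀ / 2 ≠ ⊤ := (ENNReal.div_lt_top hε₀t two_ne_zero).ne
  have hε₁0 : ε₁ ≠ 0 := (ENNReal.rpow_pos (hhalf0.bot_lt) hhalft).ne'
  have hε₁p : ε₁ ^ p = ε₀ / 2 := by
    rw [hε₁def, ← ENNReal.rpow_mul, one_div, inv_mul_cancel₀ hp0.ne', ENNReal.rpow_one]
  obtain ⟨K, hKT, hKc, hνK⟩ := hTm.exists_isCompact_lt_add (MeasureTheory.measure_ne_top ν T) hε₁0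
  have hνKc : ν Kᶜ ≤ ε₁ := by
    have hdiff : ν (T \ K) < ε₁ :=
      MeasureTheory.measure_diff_lt_of_lt_add hKc.measurableSet.nullMeasurableSet hKT
        (MeasureTheory.measure_ne_top ν K) hνK
    have h2 : Kᶜ ⊆ Tᶜ ∪ (T \ K) := by
      intro x hx
      by_cases hxT : x ∈ T
      · exact Or.inr ⟨hxT, hx⟩
      · exact Or.inl hxT
    calc ν Kᶜ ≤ ν Tᶜ + ν (T \ K) := (MeasureTheory.measure_mono h2).trans
          (MeasureTheory.measure_union_le _ _)
      _ ≤ 0 + ε₁ := add_le_add hνTc.le hdiff.le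
      _ = ε₁ := zero_add _
  have hvolK : MeasureTheory.volume K = 0 :=
    le_antisymm ((MeasureTheory.measure_mono hKT).trans hvolT.le) (zero_le)
  set M := ν Set.univ ^ p with hM
  have hMt : M ≠ ⊤ := ENNReal.rpow_ne_top_of_nonneg hp0.le (MeasureTheory.measure_ne_top ν _)
  have hM1_0 : M + 1 ≠ 0 := by simp
  have hM1t : M + 1 ≠ ⊤ := ENNReal.add_ne_top.2 ⟨hMt, ENNReal.one_ne_top⟩
  have hq0 : ε₀ / (2 * (M + 1)) ≠ 0 :=
    (ENNReal.div_pos hε₀0 (ENNReal.mul_ne_top ENNReal.ofNat_ne_top hM1t)).ne'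
  have hqt : ε₀ / (2 * (M + 1)) ≠ ⊤ :=
    (ENNReal.div_lt_top hε₀t (by simp)).ne
  have htpos : (0:ℝ≥0∞) < ENNReal.ofReal t := by simpa using ht
  set r := (ε₀ / (2 * (M + 1)) * ENNReal.ofReal t ^ (1 - p)) ^ (1 / (1 - p)) with hr
  have hbase0 : ε₀ / (2 * (M + 1)) * ENNReal.ofReal t ^ (1 - p) ≠ 0 :=
    mul_ne_zero hq0 (ENNReal.rpow_pos htpos ENNReal.ofReal_ne_top).ne'
  have hbaset : ε₀ / (2 * (M + 1)) * ENNReal.ofReal t ^ (1 - p) ≠ ⊤ :=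
    ENNReal.mul_ne_top hqt (ENNReal.rpow_ne_top_of_nonneg h1p.le ENNReal.ofReal_ne_top)
  have hr0 : 0 < r := ENNReal.rpow_pos hbase0.bot_lt hbaset
  have hrpow : r ^ (1 - p) = ε₀ / (2 * (M + 1)) * ENNReal.ofReal t ^ (1 - p) := by
    rw [hr, ← ENNReal.rpow_mul, one_div, inv_mul_cancel₀ h1p.ne', ENNReal.rpow_one]
  obtain ⟨U, hKU, hUopen, hvolU⟩ := Set.exists_isOpen_lt_of_lt K r (by rw [hvolK]; exact hr0)
  obtain ⟨d, hd0, hdsub⟩ := hKc.exists_thickening_subset_open hUopen hKU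
  have hev1 : ∀ᶠ n : ℕ in Filter.atTop, t / (n:ℝ) < d :=
    (tendsto_const_div_atTop_nhds_zero_nat t).eventually_lt_const hd0
  filter_upwards [hev1, Filter.eventually_ge_atTop 1] with n hnd hn1
  have hn0 : (0:ℝ) < (n:ℝ) := by exact_mod_cast hn1
  set I : ℕ → Set ℝ := fun j => Set.Ioc ((j:ℝ)*t/n) (((j:ℝ)+1)*t/n) with hI
  have hIm : ∀ j, MeasurableSet (I j) := fun j => measurableSet_Ioc
  have hdisj := (Ioc_pairwiseDisjoint t ht.le n).subset (Set.subset_univ (↑(Finset.range n) : Set ℕ))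
  have hvolI : ∀ j, MeasureTheory.volume (I j) = ENNReal.ofReal (t / n) := by
    intro j
    rw [hI]
    simp only [Real.volume_Ioc]
    congr 1
    ring
  classical
  set A := (Finset.range n).filter (fun j => (I j ∩ K).Nonempty) with hA
  set B := (Finset.range n).filter (fun j => ¬ (I j ∩ K).Nonempty) with hB
  have hsplit : ∑ j ∈ Finset.range n, ν (I j) ^ p
      = ∑ j ∈ A, ν (I j) ^ p + ∑ j ∈ B, ν (I j) ^ p :=
    (Finset.sum_filter_add_sum_filter_not _ _ _).symm
  have hIU : ∀ j ∈ A, I j ⊆ U := by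
    intro j hj x hx
    obtain ⟨y, hyI, hyK⟩ := (Finset.mem_filter.1 hj).2
    apply hdsub
    rw [Metric.mem_thickening_iff]
    refine ⟨y, hyK, ?_⟩
    rw [Real.dist_eq, abs_sub_lt_iff]
    obtain ⟨hx1, hx2⟩ := hx
    obtain ⟨hy1, hy2⟩ := hyI
    have hlen : ((j:ℝ)+1)*t/n - (j:ℝ)*t/n = t/n := by ring
    constructor <;> linarith
  have hAsub : (↑A : Set ℕ).PairwiseDisjoint I :=
    hdisj.subset (Finset.coe_subset.2 (Finset.filter_subset _ _))
  have hBsub' : (↑B : Set ℕ).PairwiseDisjoint I :=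
    hdisj.subset (Finset.coe_subset.2 (Finset.filter_subset _ _))
  have hcard : (A.card : ℝ≥0∞) * ENNReal.ofReal (t/n) ≤ r := by
    calc (A.card : ℝ≥0∞) * ENNReal.ofReal (t/n) = ∑ _j ∈ A, ENNReal.ofReal (t/n) := by
          rw [Finset.sum_const, nsmul_eq_mul]
      _ = ∑ j ∈ A, MeasureTheory.volume (I j) := by
          exact Finset.sum_congr rfl fun j _ => (hvolI j).symm
      _ = MeasureTheory.volume (⋃ j ∈ A, I j) :=
          (MeasureTheory.measure_biUnion_finset hAsub (fun j _ => hIm j)).symm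
      _ ≤ MeasureTheory.volume U := by
          apply MeasureTheory.measure_mono
          simp only [Set.iUnion_subset_iff]
          exact hIU
      _ ≤ r := hvolU.le
  have hofR0 : ENNReal.ofReal (t/n) ≠ 0 := by
    simp only [ne_eq, ENNReal.ofReal_eq_zero, not_le]
    positivity
  have hcard2 : (A.card : ℝ≥0∞) ≤ r / ENNReal.ofReal (t/n) :=
    (ENNReal.le_div_iff_mul_le (Or.inl hofR0) (Or.inl ENNReal.ofReal_ne_top)).2 hcard
  have hνA : ∑ j ∈ A, ν (I j) ≤ ν Set.univ := by
    calc ∑ j ∈ A, ν (I j) = ν (⋃ j ∈ A, I j) :=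
          (MeasureTheory.measure_biUnion_finset hAsub (fun j _ => hIm j)).symm
      _ ≤ ν Set.univ := MeasureTheory.measure_mono (Set.subset_univ _)
  have hdivpos : (0:ℝ) < t / n := by positivity
  have hratio : ENNReal.ofReal t / ENNReal.ofReal (t/n) = (n : ℝ≥0∞) := by
    rw [← ENNReal.ofReal_div_of_pos hdivpos]
    rw [show t / (t/n) = (n:ℝ) by field_simp]
    exact ENNReal.ofReal_natCast n
  have hfrac : ε₀ / (2*(M+1)) * M ≤ ε₀ / 2 := by
    calc ε₀ / (2*(M+1)) * M ≤ ε₀ / (2*(M+1)) * (M+1) := by gcongr; exact le_self_add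
      _ = ε₀ / 2 := by
        rw [div_eq_mul_inv, ENNReal.mul_inv (Or.inl two_ne_zero) (Or.inl ENNReal.ofNat_ne_top),
          mul_assoc, mul_assoc, ENNReal.inv_mul_cancel hM1_0 hM1t, mul_one, ← div_eq_mul_inv]
  have hpart1 : ∑ j ∈ A, ν (I j) ^ p ≤ ε₀/2 * (n:ℝ≥0∞)^(1-p) := by
    calc ∑ j ∈ A, ν (I j) ^ p
        ≤ (A.card : ℝ≥0∞) ^ (1-p) * (∑ j ∈ A, ν (I j)) ^ p := holder_sum A _ hp0 hp1
      _ ≤ (r / ENNReal.ofReal (t/n)) ^ (1-p) * M := by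
          rw [hM]; gcongr
      _ = (ε₀ / (2 * (M + 1))) * ((n:ℝ≥0∞)^(1-p) * M) := by
          rw [ENNReal.div_rpow_of_nonneg _ _ h1p.le, hrpow, mul_div_assoc,
            ← ENNReal.div_rpow_of_nonneg _ _ h1p.le, hratio, mul_assoc]
      _ = (ε₀ / (2*(M+1)) * M) * (n:ℝ≥0∞)^(1-p) := by ring
      _ ≤ ε₀/2 * (n:ℝ≥0∞)^(1-p) := mul_le_mul_left hfrac _
  have hpart2 : ∑ j ∈ B, ν (I j) ^ p ≤ ε₀/2 * (n:ℝ≥0∞)^(1-p) := by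
    have hBK : ∀ j ∈ B, I j ⊆ Kᶜ := by
      intro j hj x hx hxK
      exact (Finset.mem_filter.1 hj).2 ⟨x, hx, hxK⟩
    have hsumB : ∑ j ∈ B, ν (I j) ≤ ε₁ := by
      calc ∑ j ∈ B, ν (I j) = ν (⋃ j ∈ B, I j) :=
            (MeasureTheory.measure_biUnion_finset hBsub' (fun j _ => hIm j)).symm
        _ ≤ ν Kᶜ := by
            apply MeasureTheory.measure_mono
            simp only [Set.iUnion_subset_iff]
            exact hBK
        _ ≤ ε₁ := hνKc
    calc ∑ j ∈ B, ν (I j) ^ p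
        ≤ (B.card : ℝ≥0∞) ^ (1-p) * (∑ j ∈ B, ν (I j)) ^ p := holder_sum B _ hp0 hp1
      _ ≤ (n : ℝ≥0∞)^(1-p) * ε₁^p := by
          gcongr
          have hcardB : B.card ≤ n := by
            rw [hB]
            exact (Finset.card_filter_le _ _).trans (Finset.card_range n).le
          exact_mod_cast hcardB
      _ = ε₀/2 * (n:ℝ≥0∞)^(1-p) := by rw [hε₁p, mul_comm]
  rw [hsplit]
  calc ∑ j ∈ A, ν (I j) ^ p + ∑ j ∈ B, ν (I j) ^ p
      ≤ ε₀/2 * (n:ℝ≥0∞)^(1-p) + ε₀/2 * (n:ℝ≥0∞)^(1-p) := add_le_add hpart1 hpart2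
    _ = ε₀ * (n:ℝ≥0∞)^(1-p) := by rw [← add_mul, ENNReal.add_halves]
lemma cc_eq' {α : ℝ} {m : ℕ} (hm : m ≠ 0) :
    cc α m = (m:ℝ) ^ α - ((m:ℝ) - 1) ^ α := by
  unfold cc; rw [if_neg hm]

lemma const_pow {α β p tn c : ℝ} (htn : 0 ≤ tn) (hc : 0 ≤ c)
    (hβ2 : 2 * p = β) (hαβ : α * β = 1 - p) :
    ((tn ^ α * c) ^ 2) ^ p = tn ^ (1 - p) * c ^ β := by
  have hbase : 0 ≤ tn ^ α * c := mul_nonneg (Real.rpow_nonneg htn α) hc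
  rw [← Real.rpow_two (tn ^ α * c), ← Real.rpow_mul hbase, hβ2,
    Real.mul_rpow (Real.rpow_nonneg htn α) hc, ← Real.rpow_mul htn, hαβ]

lemma pointwise_bound {α : ℝ} (hα0 : 0 < α) (hα1 : α < 1) {t : ℝ} {n : ℕ}
    (ht : 0 < t) (hn : 0 < (n:ℝ)) (i j : ℕ) (hj : j ≤ i) {s : ℝ}
    (hs1 : (j:ℝ)*t/n < s) (hs2 : s ≤ ((j:ℝ)+1)*t/n) :
    ((((i:ℝ)+1)*t/n - s) ^ α - (max ((i:ℝ)*t/n - s) 0) ^ α) ^ 2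
      ≤ ((t/n) ^ α * cc α (i-j)) ^ 2 := by
  have hh : (0:ℝ) < t/n := by positivity
  have hji : (j:ℝ) ≤ (i:ℝ) := by exact_mod_cast hj
  have e1 : ((i:ℝ)+1)*t/n - s = ((i:ℝ)*t/n - s) + t/n := by ring
  rcases eq_or_lt_of_le hj with rfl | hlt
  · -- diagonal case j = i
    have hmax : max ((j:ℝ)*t/n - s) 0 = 0 := max_eq_right (by linarith)
    rw [hmax, Real.zero_rpow hα0.ne', sub_zero, Nat.sub_self]
    have hcc : cc α 0 = 1 := by simp [cc]
    rw [hcc, mul_one]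
    have ha0 : 0 ≤ ((j:ℝ)+1)*t/n - s := by linarith
    have ha1 : ((j:ℝ)+1)*t/n - s ≤ t/n := by
      have h2 : (j:ℝ)*t/n + t/n = ((j:ℝ)+1)*t/n := by ring
      linarith
    exact pow_le_pow_left₀ (Real.rpow_nonneg ha0 α)
      (Real.rpow_le_rpow ha0 ha1 hα0.le) 2
  · -- off-diagonal case j < i
    set m : ℕ := i - j with hm
    have hm0 : m ≠ 0 := Nat.sub_ne_zero_of_lt hlt
    have hmcast : (m:ℝ) = (i:ℝ) - (j:ℝ) := by rw [hm, Nat.cast_sub hj]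
    have hm1 : (1:ℝ) ≤ (m:ℝ) := by exact_mod_cast Nat.one_le_iff_ne_zero.2 hm0
    set x : ℝ := (i:ℝ)*t/n - s with hx
    have hxlow : ((m:ℝ) - 1) * (t/n) ≤ x := by
      rw [hx, hmcast]
      have h3 : ((i:ℝ) - (j:ℝ) - 1) * (t/n) = (i:ℝ)*t/n - ((j:ℝ)+1)*t/n := by ring
      linarith
    have hy0 : (0:ℝ) ≤ ((m:ℝ) - 1) * (t/n) := by nlinarith [hh.le]
    have hx0 : 0 ≤ x := hy0.trans hxlow
    have hmax : max ((i:ℝ)*t/n - s) 0 = x := max_eq_left hx0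
    rw [hmax, e1]
    have hsec := rpow_secant hα0 hα1 hh.le hy0 hxlow
    have hyval : (((m:ℝ) - 1) * (t/n) + t/n) ^ α - (((m:ℝ) - 1) * (t/n)) ^ α
        = (t/n) ^ α * cc α m := by
      have h1 : ((m:ℝ) - 1) * (t/n) + t/n = (m:ℝ) * (t/n) := by ring
      rw [h1, Real.mul_rpow (by linarith) hh.le,
        Real.mul_rpow (by linarith) hh.le, cc_eq' hm0]
      ring
    have hnn : 0 ≤ (x + t/n) ^ α - x ^ α :=
      sub_nonneg.2 (Real.rpow_le_rpow hx0 (by linarith) hα0.le)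
    exact pow_le_pow_left₀ hnn (hsec.trans_eq hyval) 2

lemma Ioc_cover {t : ℝ} (ht : 0 < t) {n : ℕ} (hn : 1 ≤ n) (i : ℕ) :
    Set.Ioc (0:ℝ) (((i:ℝ)+1)*t/n) ⊆
      ⋃ j ∈ Finset.range (i+1), Set.Ioc ((j:ℝ)*t/n) (((j:ℝ)+1)*t/n) := by
  intro s hs
  obtain ⟨hs0, hs1⟩ := hs
  have hn0 : (0:ℝ) < (n:ℝ) := by exact_mod_cast hn
  set k := ⌈s * n / t⌉₊ with hkdef
  have hsn : 0 < s * n / t := by positivity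
  have hk1 : 1 ≤ k := Nat.one_le_ceil_iff.2 hsn
  have hceil_le : s * n / t ≤ (k:ℝ) := Nat.le_ceil _
  have hceil_gt : (k:ℝ) < s * n / t + 1 := Nat.ceil_lt_add_one hsn.le
  have hk2 : k ≤ i + 1 := by
    rw [hkdef]
    apply Nat.ceil_le.2
    push_cast
    rw [div_le_iff₀ ht]
    rw [le_div_iff₀ hn0] at hs1
    linarith
  have hkc : ((k - 1 : ℕ) : ℝ) = (k:ℝ) - 1 := by
    push_cast [Nat.cast_sub hk1]
    ring
  refine Set.mem_biUnion (Finset.mem_range.2 (by omega : k - 1 < i + 1)) ?_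
  constructor
  · rw [hkc, div_lt_iff₀ hn0]
    have h5 : (k:ℝ) - 1 < s * n / t := by linarith
    exact (lt_div_iff₀ ht).1 h5
  · rw [hkc, le_div_iff₀ hn0]
    have h6 : ((k:ℝ) - 1 + 1) = (k:ℝ) := by ring
    rw [h6]
    exact (div_le_iff₀ ht).1 hceil_le
open MeasureTheory Filter

/-- Lemma A.3(ii) of the paper: if `ν` is a finite nonzero Borel measure on `[0,t]`
singular with respect to Lebesgue measure, `α ∈ (0,1/4)` and `β = 2/(1+2α)`, then
`∑_{i=1}^n (∫₀^{t_i^n} ((t_i^n-s)^α - (t_{i-1}^n-s)₊^α)² dν(s))^{β/2} → 0`. -/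
theorem stmt11 (t α β : ℝ) (ht : 0 < t) (hα : α ∈ Set.Ioo (0:ℝ) (1/4))
    (hβ : β = 2 / (1 + 2 * α))
    (ν : Measure ℝ) [IsFiniteMeasure ν] (hν0 : ν ≠ 0)
    (hsupp : ν (Set.Icc (0:ℝ) t)ᶜ = 0)
    (hsing : ν.MutuallySingular MeasureTheory.volume) :
    Filter.Tendsto (fun n : ℕ =>
      ∑ i ∈ Finset.range n,
        (∫⁻ s in Set.Ioc (0:ℝ) (((i:ℝ) + 1) * t / n),
          ENNReal.ofReal
            (((((i:ℝ) + 1) * t / n - s) ^ α - (max ((i:ℝ) * t / n - s) 0) ^ α) ^ 2) ∂ν)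
          ^ (β / 2))
      Filter.atTop (nhds 0) := by
  obtain ⟨hα0, hα4⟩ := hα
  have hα1 : α < 1 := by linarith
  have hden : (0:ℝ) < 1 + 2*α := by linarith
  have hβ0 : 0 < β := by rw [hβ]; positivity
  set p : ℝ := β/2 with hpdef
  have hp0 : 0 < p := by rw [hpdef]; positivity
  have hpeq : p = 1/(1+2*α) := by rw [hpdef, hβ]; ring
  have hp1 : p < 1 := by rw [hpeq, div_lt_one hden]; linarith
  have hβ2 : 2 * p = β := by rw [hpdef]; ring
  have hαβ : α * β = 1 - p := by rw [hpeq, hβ]; field_simp; ring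
  have hsummable := cc_summable hα0 hα4 hβ
  set Bc : ℝ≥0∞ := ∑' m, ENNReal.ofReal (cc α m ^ β) with hBc
  have hBct : Bc ≠ ⊤ := by
    rw [hBc, ← ENNReal.ofReal_tsum_of_nonneg
      (fun m => Real.rpow_nonneg (cc_nonneg hα0.le m) β) hsummable]
    exact ENNReal.ofReal_ne_top
  rw [ENNReal.tendsto_nhds_zero]
  intro ε hε
  set D : ℝ≥0∞ := ENNReal.ofReal (t ^ (1-p)) * Bc + 1 with hD
  have hDt : D ≠ ⊤ := by
    rw [hD]
    exact ENNReal.add_ne_top.2 ⟨ENNReal.mul_ne_top ENNReal.ofReal_ne_top hBct, ENNReal.one_ne_top⟩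
  have hD0 : D ≠ 0 := by rw [hD]; simp
  have hεD : 0 < ε / D := ENNReal.div_pos hε.ne' hDt
  filter_upwards [key_singular t ht hp0 hp1 ν hsupp hsing hεD,
    Filter.eventually_ge_atTop 1] with n hn hn1
  have hn0 : (0:ℝ) < (n:ℝ) := by exact_mod_cast hn1
  set I : ℕ → Set ℝ := fun j => Set.Ioc ((j:ℝ)*t/n) (((j:ℝ)+1)*t/n) with hI
  set T0 : ℝ≥0∞ := ENNReal.ofReal ((t/n) ^ (1-p)) with hT0
  have hdisj := Ioc_pairwiseDisjoint t ht.le n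
  have hstep1 : ∀ i ∈ Finset.range n,
      (∫⁻ s in Set.Ioc (0:ℝ) (((i:ℝ) + 1) * t / n),
          ENNReal.ofReal
            (((((i:ℝ) + 1) * t / n - s) ^ α - (max ((i:ℝ) * t / n - s) 0) ^ α) ^ 2) ∂ν) ^ p
      ≤ ∑ j ∈ Finset.range (i+1),
          ν (I j) ^ p * (T0 * ENNReal.ofReal (cc α (i-j) ^ β)) := by
    intro i _
    have hint : (∫⁻ s in Set.Ioc (0:ℝ) (((i:ℝ) + 1) * t / n),
        ENNReal.ofReal
          (((((i:ℝ) + 1) * t / n - s) ^ α - (max ((i:ℝ) * t / n - s) 0) ^ α) ^ 2) ∂ν)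
        ≤ ∑ j ∈ Finset.range (i+1),
            ENNReal.ofReal (((t/n) ^ α * cc α (i-j)) ^ 2) * ν (I j) := by
      calc (∫⁻ s in Set.Ioc (0:ℝ) (((i:ℝ) + 1) * t / n),
            ENNReal.ofReal
              (((((i:ℝ) + 1) * t / n - s) ^ α - (max ((i:ℝ) * t / n - s) 0) ^ α) ^ 2) ∂ν)
          ≤ ∫⁻ s in ⋃ j ∈ Finset.range (i+1), I j,
            ENNReal.ofReal
              (((((i:ℝ) + 1) * t / n - s) ^ α - (max ((i:ℝ) * t / n - s) 0) ^ α) ^ 2) ∂ν :=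
            lintegral_mono_set (Ioc_cover ht hn1 i)
        _ = ∑ j ∈ Finset.range (i+1), ∫⁻ s in I j,
            ENNReal.ofReal
              (((((i:ℝ) + 1) * t / n - s) ^ α - (max ((i:ℝ) * t / n - s) 0) ^ α) ^ 2) ∂ν :=
            lintegral_biUnion_finset
              (hdisj.subset (Set.subset_univ _)) (fun j _ => measurableSet_Ioc) _
        _ ≤ ∑ j ∈ Finset.range (i+1), ENNReal.ofReal (((t/n) ^ α * cc α (i-j)) ^ 2) * ν (I j) := by
            apply Finset.sum_le_sum
            intro j hj
            have hji : j ≤ i := by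
              have := Finset.mem_range.1 hj; omega
            calc ∫⁻ s in I j,
                ENNReal.ofReal
                  (((((i:ℝ) + 1) * t / n - s) ^ α - (max ((i:ℝ) * t / n - s) 0) ^ α) ^ 2) ∂ν
                ≤ ∫⁻ _s in I j, ENNReal.ofReal (((t/n) ^ α * cc α (i-j)) ^ 2) ∂ν := by
                  apply setLIntegral_mono measurable_const
                  intro s hs
                  exact ENNReal.ofReal_le_ofReal
                    (pointwise_bound hα0 hα1 ht hn0 i j hji hs.1 hs.2)
              _ = ENNReal.ofReal (((t/n) ^ α * cc α (i-j)) ^ 2) * ν (I j) :=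
                  setLIntegral_const _ _
    calc (∫⁻ s in Set.Ioc (0:ℝ) (((i:ℝ) + 1) * t / n),
          ENNReal.ofReal
            (((((i:ℝ) + 1) * t / n - s) ^ α - (max ((i:ℝ) * t / n - s) 0) ^ α) ^ 2) ∂ν) ^ p
        ≤ (∑ j ∈ Finset.range (i+1),
            ENNReal.ofReal (((t/n) ^ α * cc α (i-j)) ^ 2) * ν (I j)) ^ p :=
          ENNReal.rpow_le_rpow hint hp0.le
      _ ≤ ∑ j ∈ Finset.range (i+1),
            (ENNReal.ofReal (((t/n) ^ α * cc α (i-j)) ^ 2) * ν (I j)) ^ p :=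
          sum_rpow_le _ _ hp0 hp1.le
      _ = ∑ j ∈ Finset.range (i+1), ν (I j) ^ p * (T0 * ENNReal.ofReal (cc α (i-j) ^ β)) := by
          apply Finset.sum_congr rfl
          intro j _
          rw [ENNReal.mul_rpow_of_nonneg _ _ hp0.le, mul_comm]
          congr 1
          rw [ENNReal.ofReal_rpow_of_nonneg (by positivity) hp0.le,
            const_pow (by positivity) (cc_nonneg hα0.le _) hβ2 hαβ,
            ENNReal.ofReal_mul (by positivity), hT0]
  have hTn : T0 * (n:ℝ≥0∞)^(1-p) = ENNReal.ofReal (t^(1-p)) := by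
    rw [hT0, show ((n:ℝ≥0∞)) = ENNReal.ofReal ((n:ℝ)) from (ENNReal.ofReal_natCast n).symm,
      ENNReal.ofReal_rpow_of_nonneg hn0.le (by linarith : (0:ℝ) ≤ 1-p),
      ← ENNReal.ofReal_mul (by positivity),
      ← Real.mul_rpow (by positivity) hn0.le,
      show t/(n:ℝ) * (n:ℝ) = t from by field_simp]
  calc ∑ i ∈ Finset.range n,
      (∫⁻ s in Set.Ioc (0:ℝ) (((i:ℝ) + 1) * t / n),
          ENNReal.ofReal
            (((((i:ℝ) + 1) * t / n - s) ^ α - (max ((i:ℝ) * t / n - s) 0) ^ α) ^ 2) ∂ν) ^ p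
      ≤ ∑ i ∈ Finset.range n, ∑ j ∈ Finset.range (i+1),
          ν (I j) ^ p * (T0 * ENNReal.ofReal (cc α (i-j) ^ β)) :=
        Finset.sum_le_sum hstep1
    _ = ∑ j ∈ Finset.range n, ∑ i ∈ Finset.Ico j n,
          ν (I j) ^ p * (T0 * ENNReal.ofReal (cc α (i-j) ^ β)) := by
        simp only [Finset.range_eq_Ico]
        exact (Finset.sum_Ico_Ico_comm 0 n
          (fun j i => ν (I j) ^ p * (T0 * ENNReal.ofReal (cc α (i-j) ^ β)))).symm
    _ ≤ ∑ j ∈ Finset.range n, ν (I j) ^ p * (T0 * Bc) := by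
        apply Finset.sum_le_sum
        intro j _
        calc ∑ i ∈ Finset.Ico j n, ν (I j) ^ p * (T0 * ENNReal.ofReal (cc α (i-j) ^ β))
            = ν (I j) ^ p * T0 * ∑ i ∈ Finset.Ico j n, ENNReal.ofReal (cc α (i-j) ^ β) := by
              rw [Finset.mul_sum]
              exact Finset.sum_congr rfl fun i _ => by ring
          _ ≤ ν (I j) ^ p * T0 * Bc := by
              gcongr
              rw [Finset.sum_Ico_eq_sum_range]
              simp only [Nat.add_sub_cancel_left]
              rw [hBc]
              exact ENNReal.sum_le_tsum _
          _ = ν (I j) ^ p * (T0 * Bc) := by rw [mul_assoc]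
    _ = (∑ j ∈ Finset.range n, ν (I j) ^ p) * (T0 * Bc) := by
        rw [← Finset.sum_mul]
    _ ≤ (ε / D * (n:ℝ≥0∞)^(1-p)) * (T0 * Bc) := mul_le_mul_left hn _
    _ = (T0 * (n:ℝ≥0∞)^(1-p)) * Bc * (ε / D) := by ring
    _ = ENNReal.ofReal (t^(1-p)) * Bc * (ε / D) := by rw [hTn]
    _ ≤ D * (ε / D) := mul_le_mul_left le_self_add _
    _ = ε := ENNReal.mul_div_cancel hD0 hDt
end
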